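/- arXiv:1008.0110 — 8 statements merged into one kernel-verified Lean document; each statement's English description precedes it below -/
import Mathlib

section
/- Let ABC be a triangle with circumcenter O and circumradius R. Let P be any point in the plane, and let A', B', C' be the orthogonal projections of P onto lines BC, CA, AB respectively. Then the area of triangle A'B'C' equals |R² − OP²|/(4R²) times the area of triangle ABC. -/
open EuclideanGeometry Real


noncomputable def triArea (X Y Z : EuclideanSpace ℝ (Fin 2)) : ℝ :=
  |(Y 0 - X 0) * (Z 1 - X 1) - (Y 1 - X 1) * (Z 0 - X 0)| / 2

/-- `F` is the foot of the perpendicular from `P` to the line through `X` and `Y`. -/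
def IsFoot (P F X Y : EuclideanSpace ℝ (Fin 2)) : Prop :=
  F ∈ affineSpan ℝ ({X, Y} : Set (EuclideanSpace ℝ (Fin 2))) ∧
    inner ℝ (P - F) (Y - X) = (0 : ℝ)

theorem foot_coords {P F X Y : EuclideanSpace ℝ (Fin 2)} (h : IsFoot P F X Y) :
    ∃ r : ℝ, F 0 = X 0 + r * (Y 0 - X 0) ∧ F 1 = X 1 + r * (Y 1 - X 1) ∧
      r * ((Y 0 - X 0)^2 + (Y 1 - X 1)^2)
        = (P 0 - X 0) * (Y 0 - X 0) + (P 1 - X 1) * (Y 1 - X 1) := by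
  obtain ⟨hm, hp⟩ := h
  have h1 : F -ᵥ X ∈ (affineSpan ℝ ({X, Y} : Set (EuclideanSpace ℝ (Fin 2)))).direction :=
    AffineSubspace.vsub_mem_direction hm (left_mem_affineSpan_pair ℝ X Y)
  rw [direction_affineSpan, mem_vectorSpan_pair_rev] at h1
  obtain ⟨r, hr⟩ := h1
  have h0 : F 0 = X 0 + r * (Y 0 - X 0) := by
    have := congrArg (· 0) hr
    simp only [vsub_eq_sub, PiLp.smul_apply, PiLp.sub_apply, smul_eq_mul] at this
    linarith
  have h1' : F 1 = X 1 + r * (Y 1 - X 1) := by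
    have := congrArg (· 1) hr
    simp only [vsub_eq_sub, PiLp.smul_apply, PiLp.sub_apply, smul_eq_mul] at this
    linarith
  refine ⟨r, h0, h1', ?_⟩
  rw [PiLp.inner_apply] at hp
  simp only [Fin.sum_univ_two, RCLike.inner_apply, conj_trivial, PiLp.sub_apply] at hp
  rw [h0, h1'] at hp
  linear_combination -hp

theorem det_ne_zero {A B C : EuclideanSpace ℝ (Fin 2)} (h : AffineIndependent ℝ ![A, B, C]) :
    (B 0 - A 0) * (C 1 - A 1) - (B 1 - A 1) * (C 0 - A 0) ≠ 0 := by
  intro h0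
  rw [affineIndependent_iff_not_collinear_set] at h
  apply h
  rw [collinear_iff_exists_forall_eq_smul_vadd]
  by_cases hAB : B = A
  · refine ⟨A, C - A, ?_⟩
    rintro q (rfl | rfl | rfl)
    · exact ⟨0, by simp⟩
    · exact ⟨0, by simp [hAB]⟩
    · exact ⟨1, by simp⟩
  · have hn : (B 0 - A 0)^2 + (B 1 - A 1)^2 ≠ 0 := by
      intro hz
      apply hAB
      have e0 : B 0 - A 0 = 0 := by nlinarith [sq_nonneg (B 0 - A 0), sq_nonneg (B 1 - A 1)]
      have e1 : B 1 - A 1 = 0 := by nlinarith [sq_nonneg (B 0 - A 0), sq_nonneg (B 1 - A 1)]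
      ext i
      fin_cases i
      · show B 0 = A 0; linarith
      · show B 1 = A 1; linarith
    refine ⟨A, B - A, ?_⟩
    rintro q (rfl | rfl | rfl)
    · exact ⟨0, by simp⟩
    · exact ⟨1, by simp⟩
    · refine ⟨((q 0 - A 0) * (B 0 - A 0) + (q 1 - A 1) * (B 1 - A 1))
        / ((B 0 - A 0)^2 + (B 1 - A 1)^2), ?_⟩
      rw [vadd_eq_add]
      ext i
      fin_cases i
      · show q 0 = ((((q 0 - A 0) * (B 0 - A 0) + (q 1 - A 1) * (B 1 - A 1))
          / ((B 0 - A 0)^2 + (B 1 - A 1)^2)) • (B - A) + A) 0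
        rw [PiLp.add_apply, PiLp.smul_apply, PiLp.sub_apply, smul_eq_mul]
        rw [div_mul_eq_mul_div, div_add' _ _ _ hn, eq_div_iff hn]
        linear_combination (-(B 1 - A 1))*h0
      · show q 1 = ((((q 0 - A 0) * (B 0 - A 0) + (q 1 - A 1) * (B 1 - A 1))
          / ((B 0 - A 0)^2 + (B 1 - A 1)^2)) • (B - A) + A) 1
        rw [PiLp.add_apply, PiLp.smul_apply, PiLp.sub_apply, smul_eq_mul]
        rw [div_mul_eq_mul_div, div_add' _ _ _ hn, eq_div_iff hn]
        linear_combination (B 0 - A 0)*h0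

set_option maxHeartbeats 1000000 in
theorem key0 (b0 b1 c0 c1 o0 o1 p0 p1 r s t R : ℝ)
    (hdet : (b0*c1-b1*c0) ≠ 0)
    (h1 : o0^2+o1^2 = R^2)
    (h2 : (o0-b0)^2+(o1-b1)^2 = R^2)
    (h3 : (o0-c0)^2+(o1-c1)^2 = R^2)
    (hr : r*((c0-b0)^2+(c1-b1)^2) = (p0-b0)*(c0-b0)+(p1-b1)*(c1-b1))
    (hs : s*(c0^2+c1^2) = (p0-c0)*(0-c0)+(p1-c1)*(0-c1))
    (ht : t*(b0^2+b1^2) = p0*b0+p1*b1) :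
    4*R^2*(((c0+s*(0-c0))-(b0+r*(c0-b0)))*((0+t*(b1-0))-(b1+r*(c1-b1)))-((c1+s*(0-c1))-(b1+r*(c1-b1)))*((0+t*(b0-0))-(b0+r*(c0-b0)))) = (R^2-((o0-p0)^2+(o1-p1)^2))*(b0*c1-b1*c0) := by
  have keyA : (((c0-b0)^2+(c1-b1)^2)*(c0^2+c1^2)*(b0^2+b1^2))*(((c0+s*(0-c0))-(b0+r*(c0-b0)))*((0+t*(b1-0))-(b1+r*(c1-b1)))-((c1+s*(0-c1))-(b1+r*(c1-b1)))*((0+t*(b0-0))-(b0+r*(c0-b0)))) = -(b0*c1-b1*c0)^2*((((b1*c1^2*p0 + ((-1)*b1*c0*p1^2 + (-1)*b1*c0*p0^2)) + (b1*c0^2*p0 + ((-1)*b1^2*c1*p0 + b1^2*c0*p1))) + ((b0*c1*p1^2 + (b0*c1*p0^2 + (-1)*b0*c1^2*p1)) + ((-1)*b0*c0^2*p1 + ((-1)*b0^2*c1*p0 + b0^2*c0*p1))))) := by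
    linear_combination ((((((b1^3*c0*c1^2 + ((-1)*b1^3*c0*c1^2*t + (-1)*b1^3*c0*c1^2*s)) + (b1^3*c0^3 + ((-1)*b1^3*c0^3*t + (-1)*b1^3*c0^3*s))) + (((-1)*b0*b1^2*c1^3 + (b0*b1^2*c1^3*t + b0*b1^2*c1^3*s)) + ((-1)*b0*b1^2*c0^2*c1 + (b0*b1^2*c0^2*c1*t + b0*b1^2*c0^2*c1*s)))) + (((b0^2*b1*c0*c1^2 + ((-1)*b0^2*b1*c0*c1^2*t + (-1)*b0^2*b1*c0*c1^2*s)) + (b0^2*b1*c0^3 + ((-1)*b0^2*b1*c0^3*t + (-1)*b0^2*b1*c0^3*s))) + (((-1)*b0^3*c1^3 + (b0^3*c1^3*t + b0^3*c1^3*s)) + ((-1)*b0^3*c0^2*c1 + (b0^3*c0^2*c1*t + b0^3*c0^2*c1*s)))))))*hr + ((((((((-1)*b1^3*c0*c1*p1 + (b1^3*c0*c1^2 + (-1)*b1^3*c0*c1^2*t)) + ((-1)*b1^3*c0^2*p0 + (b1^3*c0^3 + (-1)*b1^3*c0^3*t))) + ((b1^4*c0*p1 + ((-1)*b1^4*c0*c1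 + 2*b1^4*c0*c1*t)) + ((-1)*b1^5*c0*t + (b0*b1^2*c1^2*p1 + (-1)*b0*b1^2*c1^3)))) + (((b0*b1^2*c1^3*t + (b0*b1^2*c0*c1*p0 + (-1)*b0*b1^2*c0^2*c1)) + (b0*b1^2*c0^2*c1*t + ((-1)*b0*b1^3*c1*p1 + b0*b1^3*c1^2))) + (((-2)*b0*b1^3*c1^2*t + (b0*b1^3*c0*p0 + (-1)*b0*b1^3*c0^2)) + ((2*b0*b1^3*c0^2*t + b0*b1^4*c1*t) + ((-1)*b0^2*b1*c0*c1*p1 + b0^2*b1*c0*c1^2))))) + (((((-1)*b0^2*b1*c0*c1^2*t + ((-1)*b0^2*b1*c0^2*p0 + b0^2*b1*c0^3)) + ((-1)*b0^2*b1*c0^3*t + ((-1)*b0^2*b1^2*c1*p0 + b0^2*b1^2*c0*p1))) + (((-2)*b0^2*b1^3*c0*t + (b0^3*c1^2*p1 + (-1)*b0^3*c1^3)) + (b0^3*c1^3*t + (b0^3*c0*c1*p0 + (-1)*b0^3*c0^2*c1)))) + (((b0^3*c0^2*c1*t + ((-1)*b0^3*b1*c1*p1 + b0^3*b1*c1^2))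 + ((-2)*b0^3*b1*c1^2*t + (b0^3*b1*c0*p0 + (-1)*b0^3*b1*c0^2))) + ((2*b0^3*b1*c0^2*t + (2*b0^3*b1^2*c1*t + (-1)*b0^4*c1*p0)) + ((b0^4*c0*c1 + (-2)*b0^4*c0*c1*t) + ((-1)*b0^4*b1*c0*t + b0^5*c1*t))))))))*hs + ((((((((-1)*b1^2*c0*c1^2*p1 + b1^2*c0*c1^3) + ((-2)*b1^2*c0^2*c1*p0 + b1^2*c0^3*p1)) + ((b1^2*c0^3*c1 + b1^3*c0*c1*p1) + ((-1)*b1^3*c0*c1^2 + b1^3*c0^2*p0))) + ((((-1)*b1^3*c0^3 + b0*b1*c1^3*p1) + ((-1)*b0*b1*c1^4 + 3*b0*b1*c0*c1^2*p0)) + (((-3)*b0*b1*c0^2*c1*p1 + (-1)*b0*b1*c0^3*p0) + (b0*b1*c0^4 + (-1)*b0*b1^2*c1^2*p1)))) + ((((b0*b1^2*c1^3 + (-1)*b0*b1^2*c0*c1*p0) + (b0*b1^2*c0^2*c1 + (-1)*b0^2*c1^3*p0)) + ((2*b0^2*c0*c1^2*p1 + (-1)*b0^2*c0*c1^3) + (b0^2*c0^2*c1*p0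 + (-1)*b0^2*c0^3*c1))) + (((b0^2*b1*c0*c1*p1 + (-1)*b0^2*b1*c0*c1^2) + (b0^2*b1*c0^2*p0 + (-1)*b0^2*b1*c0^3)) + (((-1)*b0^3*c1^2*p1 + b0^3*c1^3) + ((-1)*b0^3*c0*c1*p0 + b0^3*c0^2*c1)))))))*ht
  have keyB : (4*(b0*c1-b1*c0))^2*((((b1*c1^2*p0 + ((-1)*b1*c0*p1^2 + (-1)*b1*c0*p0^2)) + (b1*c0^2*p0 + ((-1)*b1^2*c1*p0 + b1^2*c0*p1))) + ((b0*c1*p1^2 + (b0*c1*p0^2 + (-1)*b0*c1^2*p1)) + ((-1)*b0*c0^2*p1 + ((-1)*b0^2*c1*p0 + b0^2*c0*p1))))) = (4*(b0*c1-b1*c0))^2*((b0*c1-b1*c0)*(((o0-p0)^2+(o1-p1)^2)-R^2)) := by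
    linear_combination ((((((16*b1^2*c0^2*c1*p0 + (-16)*b1^2*c0^3*p1) + ((-16)*b1^3*c0^2*p0 + 16*b1^3*c0^3)) + (((-32)*b0*b1*c0*c1^2*p0 + 32*b0*b1*c0^2*c1*p1) + (32*b0*b1^2*c0*c1*p0 + 16*b0*b1^2*c0^2*p1))) + ((((-48)*b0*b1^2*c0^2*c1 + 16*b0^2*c1^3*p0) + ((-16)*b0^2*c0*c1^2*p1 + (-16)*b0^2*b1*c1^2*p0)) + (((-32)*b0^2*b1*c0*c1*p1 + 48*b0^2*b1*c0*c1^2) + (16*b0^3*c1^2*p1 + (-16)*b0^3*c1^3))))))*h1 + (((((-16)*b1^2*c0^2*c1*p0 + (16*b1^2*c0^3*p1 + 32*b0*b1*c0*c1^2*p0)) + ((-32)*b0*b1*c0^2*c1*p1 + ((-16)*b0^2*c1^3*p0 + 16*b0^2*c0*c1^2*p1)))))*h2 + ((((16*b1^3*c0^2*p0 + ((-32)*b0*b1^2*c0*c1*p0 + (-16)*b0*b1^2*c0^2*p1)) + (16*b0^2*b1*c1^2*p0 + (32*b0^2*b1*c0*c1*p1 + (-16)*b0^3*c1^2*p1)))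))*h3
  have keyC : (4*(b0*c1-b1*c0))^2*(4*(b0*c1-b1*c0)^2*R^2) = (4*(b0*c1-b1*c0))^2*(((c0-b0)^2+(c1-b1)^2)*(c0^2+c1^2)*(b0^2+b1^2)) := by
    linear_combination ((((((((-16)*b1^3*c0^2*c1^3 + (-32)*b1^3*c0^3*c1*o0) + (32*b1^3*c0^4*o1 + ((-16)*b1^3*c0^4*c1 + 32*b1^4*c0^2*c1^2))) + ((32*b1^4*c0^3*o0 + ((-32)*b1^4*c0^4 + (-16)*b1^5*c0^2*c1)) + (32*b0*b1^2*c0*c1^4 + (96*b0*b1^2*c0^2*c1^2*o0 + (-96)*b0*b1^2*c0^3*c1*o1)))) + (((16*b0*b1^2*c0^3*c1^2 + ((-16)*b0*b1^2*c0^5 + (-64)*b0*b1^3*c0*c1^3)) + ((-96)*b0*b1^3*c0^2*c1*o0 + ((-32)*b0*b1^3*c0^3*o1 + 192*b0*b1^3*c0^3*c1))) + ((32*b0*b1^4*c0*c1^2 + ((-16)*b0*b1^4*c0^3 + (-16)*b0^2*b1*c1^5)) + ((-96)*b0^2*b1*c0*c1^3*o0 + (96*b0^2*b1*c0^2*c1^2*o1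 + 16*b0^2*b1*c0^2*c1^3))))) + ((((32*b0^2*b1*c0^4*c1 + (32*b0^2*b1^2*c1^4 + 96*b0^2*b1^2*c0*c1^2*o0)) + (96*b0^2*b1^2*c0^2*c1*o1 + ((-320)*b0^2*b1^2*c0^2*c1^2 + 32*b0^2*b1^2*c0^4))) + (((-16)*b0^2*b1^3*c1^3 + (16*b0^2*b1^3*c0^2*c1 + 32*b0^3*c1^4*o0)) + ((-32)*b0^3*c0*c1^3*o1 + ((-16)*b0^3*c0*c1^4 + (-16)*b0^3*c0^3*c1^2)))) + ((((-32)*b0^3*b1*c1^3*o0 + ((-96)*b0^3*b1*c0*c1^2*o1 + 192*b0^3*b1*c0*c1^3)) + ((-64)*b0^3*b1*c0^3*c1 + (16*b0^3*b1^2*c0*c1^2 + (-16)*b0^3*b1^2*c0^3))) + ((32*b0^4*c1^3*o1 + ((-32)*b0^4*c1^4 + 32*b0^4*c0^2*c1^2)) + ((-16)*b0^4*b1*c1^3 + (32*b0^4*b1*c0^2*c1 + (-16)*b0^5*c0*c1^2))))))))*h1 + ((((((16*b1^3*c0^2*c1^3 + (32*b1^3*c0^3*c1*o0 + (-32)*b1^3*c0^4*o1))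 + ((16*b1^3*c0^4*c1 + (-16)*b1^4*c0^2*c1^2) + ((-16)*b1^4*c0^4 + (-32)*b0*b1^2*c0*c1^4))) + (((-96)*b0*b1^2*c0^2*c1^2*o0 + (96*b0*b1^2*c0^3*c1*o1 + (-16)*b0*b1^2*c0^3*c1^2)) + ((16*b0*b1^2*c0^5 + 32*b0*b1^3*c0*c1^3) + (32*b0*b1^3*c0^3*c1 + 16*b0^2*b1*c1^5)))) + (((96*b0^2*b1*c0*c1^3*o0 + ((-96)*b0^2*b1*c0^2*c1^2*o1 + (-16)*b0^2*b1*c0^2*c1^3)) + (((-32)*b0^2*b1*c0^4*c1 + (-16)*b0^2*b1^2*c1^4) + ((-32)*b0^2*b1^2*c0^2*c1^2 + (-16)*b0^2*b1^2*c0^4))) + ((((-32)*b0^3*c1^4*o0 + 32*b0^3*c0*c1^3*o1) + (16*b0^3*c0*c1^4 + 16*b0^3*c0^3*c1^2)) + ((32*b0^3*b1*c0*c1^3 + 32*b0^3*b1*c0^3*c1) + ((-16)*b0^4*c1^4 + (-16)*b0^4*c0^2*c1^2)))))))*h2 + (((((((-16)*b1^4*c0^2*c1^2 + ((-32)*b1^4*c0^3*o0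 + (-16)*b1^4*c0^4)) + ((16*b1^5*c0^2*c1 + 32*b0*b1^3*c0*c1^3) + (96*b0*b1^3*c0^2*c1*o0 + 32*b0*b1^3*c0^3*o1))) + ((32*b0*b1^3*c0^3*c1 + ((-32)*b0*b1^4*c0*c1^2 + 16*b0*b1^4*c0^3)) + (((-16)*b0^2*b1^2*c1^4 + (-96)*b0^2*b1^2*c0*c1^2*o0) + ((-96)*b0^2*b1^2*c0^2*c1*o1 + (-32)*b0^2*b1^2*c0^2*c1^2)))) + ((((-16)*b0^2*b1^2*c0^4 + (16*b0^2*b1^3*c1^3 + (-16)*b0^2*b1^3*c0^2*c1)) + ((32*b0^3*b1*c1^3*o0 + 96*b0^3*b1*c0*c1^2*o1) + (32*b0^3*b1*c0*c1^3 + 32*b0^3*b1*c0^3*c1))) + ((((-16)*b0^3*b1^2*c0*c1^2 + 16*b0^3*b1^2*c0^3) + ((-32)*b0^4*c1^3*o1 + (-16)*b0^4*c1^4)) + (((-16)*b0^4*c0^2*c1^2 + 16*b0^4*b1*c1^3) + ((-32)*b0^4*b1*c0^2*c1 + 16*b0^5*c0*c1^2)))))))*h3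
  have h16 : (16:ℝ)*(b0*c1-b1*c0)^4 ≠ 0 := by positivity
  refine mul_left_cancel₀ h16 ?_
  linear_combination (((c0+s*(0-c0))-(b0+r*(c0-b0)))*((0+t*(b1-0))-(b1+r*(c1-b1)))-((c1+s*(0-c1))-(b1+r*(c1-b1)))*((0+t*(b0-0))-(b0+r*(c0-b0))))*keyC + 16*(b0*c1-b1*c0)^2*keyA - (b0*c1-b1*c0)^2*keyB

set_option maxHeartbeats 1000000 in
theorem key_scalar (a0 a1 b0 b1 c0 c1 o0 o1 p0 p1 r s t R : ℝ)
    (hdet : (b0-a0)*(c1-a1)-(b1-a1)*(c0-a0) ≠ 0)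
    (h1 : (o0-a0)^2+(o1-a1)^2 = R^2)
    (h2 : (o0-b0)^2+(o1-b1)^2 = R^2)
    (h3 : (o0-c0)^2+(o1-c1)^2 = R^2)
    (hr : r*((c0-b0)^2+(c1-b1)^2) = (p0-b0)*(c0-b0)+(p1-b1)*(c1-b1))
    (hs : s*((a0-c0)^2+(a1-c1)^2) = (p0-c0)*(a0-c0)+(p1-c1)*(a1-c1))
    (ht : t*((b0-a0)^2+(b1-a1)^2) = (p0-a0)*(b0-a0)+(p1-a1)*(b1-a1)) :
    4*R^2*(((c0+s*(a0-c0))-(b0+r*(c0-b0)))*((a1+t*(b1-a1))-(b1+r*(c1-b1)))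
      -((c1+s*(a1-c1))-(b1+r*(c1-b1)))*((a0+t*(b0-a0))-(b0+r*(c0-b0))))
      = (R^2-((o0-p0)^2+(o1-p1)^2))*((b0-a0)*(c1-a1)-(b1-a1)*(c0-a0)) := by
  have key := key0 (b0-a0) (b1-a1) (c0-a0) (c1-a1) (o0-a0) (o1-a1) (p0-a0) (p1-a1) r s t R
    (by exact hdet) (by linear_combination h1) (by linear_combination h2)
    (by linear_combination h3) (by linear_combination hr) (by linear_combination hs)
    (by linear_combination ht)
  linear_combination key

theorem abs_step (X Y D R : ℝ) (hR : 0 < R) (h : 4*R^2*X = (R^2 - D)*Y) :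
    |X|/2 = |R^2 - D|/(4*R^2)*(|Y|/2) := by
  have h4 : (0:ℝ) < 4*R^2 := by positivity
  have hX : X = (R^2-D)*Y/(4*R^2) := by field_simp; linarith
  rw [hX, abs_div, abs_mul, abs_of_pos h4]
  ring

/-- Pedal triangle area formula. -/
theorem pedal_area (A B C O P A' B' C' : EuclideanSpace ℝ (Fin 2)) (R : ℝ)
    (hABC : AffineIndependent ℝ ![A, B, C])
    (hOA : dist O A = R) (hOB : dist O B = R) (hOC : dist O C = R)
    (hA' : IsFoot P A' B C) (hB' : IsFoot P B' C A) (hC' : IsFoot P C' A B) :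
    triArea A' B' C' = |R ^ 2 - (dist O P) ^ 2| / (4 * R ^ 2) * triArea A B C := by
  have hd := det_ne_zero hABC
  obtain ⟨r, ha0, ha1, hr⟩ := foot_coords hA'
  obtain ⟨s, hb0, hb1, hs⟩ := foot_coords hB'
  obtain ⟨t, hc0, hc1, ht⟩ := foot_coords hC'
  have hsq : ∀ X Y : EuclideanSpace ℝ (Fin 2),
      dist X Y ^ 2 = (X 0 - Y 0)^2 + (X 1 - Y 1)^2 := by
    intro X Y
    rw [EuclideanSpace.dist_eq, Real.sq_sqrt (by positivity)]
    simp [Fin.sum_univ_two, Real.dist_eq, sq_abs]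
  have h1 : (O 0 - A 0)^2 + (O 1 - A 1)^2 = R^2 := by rw [← hsq O A, hOA]
  have h2 : (O 0 - B 0)^2 + (O 1 - B 1)^2 = R^2 := by rw [← hsq O B, hOB]
  have h3 : (O 0 - C 0)^2 + (O 1 - C 1)^2 = R^2 := by rw [← hsq O C, hOC]
  have hRpos : 0 < R := by
    rcases lt_or_eq_of_le (hOA ▸ dist_nonneg) with h | h
    · exact h
    · exfalso
      have hA : O = A := by rw [← dist_eq_zero, hOA, ← h]
      have hB : O = B := by rw [← dist_eq_zero, hOB, ← h]
      apply hd
      rw [← hA, ← hB] at *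
      ring
  have key := key_scalar (A 0) (A 1) (B 0) (B 1) (C 0) (C 1) (O 0) (O 1) (P 0) (P 1)
    r s t R hd h1 h2 h3 hr hs ht
  unfold triArea
  rw [ha0, ha1, hb0, hb1, hc0, hc1, hsq O P]
  apply abs_step _ _ _ _ hRpos
  linear_combination key
end

section
/- Let A₁ = (0,1), A₂ = (0,0), A₃ = (1,0), and let k₁, k₂, k₃ > 0. Define B₁ = (1/(1+k₁), 0), B₂ = (k₂/(1+k₂), 1/(1+k₂)), B₃ = (0, k₃/(1+k₃)), and then define C₁ on segment B₃B₂ with B₃C₁/C₁B₂ = k₁, C₂ on segment B₁B₃ with B₁C₂/C₂B₃ = k₂, and C₃ on segment B₂B₁ with B₂C₃/C₃B₁ = k₃ (explicitly, C₁ = (B₃ + k₁B₂)/(1+k₁), C₂ = (B₁ + k₂B₃)/(1+k₂), C₃ = (B₂ + k₃B₁)/(1+k₃)). Then the area of triangle C₁C₂C₃ equals (k₁k₂k₃ + 1)²/(2(1+k₁)²(1+k₂)²(1+k₃)²). -/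
open EuclideanGeometry Real

theorem area_C_triangle (k₁ k₂ k₃ : ℝ) (hk₁ : 0 < k₁) (hk₂ : 0 < k₂) (hk₃ : 0 < k₃)
    (B₁ B₂ B₃ C₁ C₂ C₃ : EuclideanSpace ℝ (Fin 2))
    (hB₁ : B₁ = ![1 / (1 + k₁), 0])
    (hB₂ : B₂ = ![k₂ / (1 + k₂), 1 / (1 + k₂)])
    (hB₃ : B₃ = ![0, k₃ / (1 + k₃)])
    (hC₁ : C₁ = ((1 + k₁)⁻¹ : ℝ) • (B₃ + k₁ • B₂))
    (hC₂ : C₂ = ((1 + k₂)⁻¹ : ℝ) • (B₁ + k₂ • B₃))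
    (hC₃ : C₃ = ((1 + k₃)⁻¹ : ℝ) • (B₂ + k₃ • B₁)) :
    triArea C₁ C₂ C₃ =
      (k₁ * k₂ * k₃ + 1) ^ 2 / (2 * (1 + k₁) ^ 2 * (1 + k₂) ^ 2 * (1 + k₃) ^ 2) := by
  have h₁ : (0:ℝ) < 1 + k₁ := by linarith
  have h₂ : (0:ℝ) < 1 + k₂ := by linarith
  have h₃ : (0:ℝ) < 1 + k₃ := by linarith
  subst hC₁ hC₂ hC₃
  simp only [triArea, PiLp.smul_apply, PiLp.add_apply, smul_eq_mul, hB₁, hB₂, hB₃,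
    Matrix.cons_val_zero, Matrix.cons_val_one, Matrix.head_cons]
  have e : ((1 + k₂)⁻¹ * (1 / (1 + k₁) + k₂ * 0) -
        (1 + k₁)⁻¹ * (0 + k₁ * (k₂ / (1 + k₂)))) *
        ((1 + k₃)⁻¹ * (1 / (1 + k₂) + k₃ * 0) -
        (1 + k₁)⁻¹ * (k₃ / (1 + k₃) + k₁ * (1 / (1 + k₂)))) -
      ((1 + k₂)⁻¹ * (0 + k₂ * (k₃ / (1 + k₃))) -
        (1 + k₁)⁻¹ * (k₃ / (1 + k₃) + k₁ * (1 / (1 + k₂)))) *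
        ((1 + k₃)⁻¹ * (k₂ / (1 + k₂) + k₃ * (1 / (1 + k₁))) -
        (1 + k₁)⁻¹ * (0 + k₁ * (k₂ / (1 + k₂)))) =
      (k₁ * k₂ * k₃ + 1) ^ 2 / ((1 + k₁) ^ 2 * (1 + k₂) ^ 2 * (1 + k₃) ^ 2) := by
    field_simp
    ring
  rw [e, abs_of_nonneg (by positivity)]
  field_simp
end

section
/- Let A₁A₂A₃ be a nondegenerate triangle, let B₁ ∈ segment A₂A₃, B₂ ∈ segment A₁A₃, B₃ ∈ segment A₂A₁, and let C₁ ∈ segment B₂B₃, C₂ ∈ segment B₁B₃, C₃ ∈ segment B₁B₂ satisfy A₂B₃/B₃A₁ = B₂C₃/C₃B₁, A₃B₁/B₁A₂ = B₃C₁/C₁B₂, and A₁B₂/B₂A₃ = B₁C₂/C₂B₃ (all points strictly interior to their segments). Then (area B₁B₂B₃)² = (area A₁A₂A₃)·(area C₁C₂C₃), i.e., the area of the middle inscribed triangle is the geometric mean of the areas of the outer and inner triangles. -/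
open EuclideanGeometry Real

private lemma ratio_aux {x z : EuclideanSpace ℝ (Fin 2)} (h : x ≠ z) {s : ℝ}
    (hs0 : 0 < s) (hs1 : s < 1) :
    dist x (AffineMap.lineMap x z s) / dist (AffineMap.lineMap x z s) z = s / (1 - s) := by
  rw [dist_left_lineMap, dist_lineMap_right, Real.norm_eq_abs, Real.norm_eq_abs,
    abs_of_pos hs0, abs_of_pos (by linarith : (0:ℝ) < 1 - s),
    mul_div_mul_right _ _ (dist_ne_zero.mpr h)]

private lemma param_eq {s u : ℝ} (hs0 : 0 < s) (hs1 : s < 1) (hu0 : 0 < u) (hu1 : u < 1)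
    (h : s / (1 - s) = u / (1 - u)) : s = u := by
  have h1 : (1:ℝ) - s ≠ 0 := by linarith
  have h2 : (1:ℝ) - u ≠ 0 := by linarith
  field_simp at h
  linear_combination h

theorem inscribed_geometric_mean (A₁ A₂ A₃ B₁ B₂ B₃ C₁ C₂ C₃ : EuclideanSpace ℝ (Fin 2))
    (hA : AffineIndependent ℝ ![A₁, A₂, A₃])
    (hB₁ : Sbtw ℝ A₂ B₁ A₃) (hB₂ : Sbtw ℝ A₁ B₂ A₃) (hB₃ : Sbtw ℝ A₂ B₃ A₁)
    (hC₁ : Sbtw ℝ B₃ C₁ B₂) (hC₂ : Sbtw ℝ B₁ C₂ B₃) (hC₃ : Sbtw ℝ B₂ C₃ B₁)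
    (hr₃ : dist A₂ B₃ / dist B₃ A₁ = dist B₂ C₃ / dist C₃ B₁)
    (hr₁ : dist A₃ B₁ / dist B₁ A₂ = dist B₃ C₁ / dist C₁ B₂)
    (hr₂ : dist A₁ B₂ / dist B₂ A₃ = dist B₁ C₂ / dist C₂ B₃) :
    (triArea B₁ B₂ B₃) ^ 2 = triArea A₁ A₂ A₃ * triArea C₁ C₂ C₃ := by
  obtain ⟨t₁, ht₁, hB₁e⟩ := hB₁.mem_image_Ioo
  obtain ⟨t₂, ht₂, hB₂e⟩ := hB₂.mem_image_Ioo
  obtain ⟨t₃, ht₃, hB₃e⟩ := hB₃.mem_image_Ioo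
  obtain ⟨u₁, hu₁, hC₁e⟩ := hC₁.mem_image_Ioo
  obtain ⟨u₂, hu₂, hC₂e⟩ := hC₂.mem_image_Ioo
  obtain ⟨u₃, hu₃, hC₃e⟩ := hC₃.mem_image_Ioo
  obtain ⟨ht₁0, ht₁1⟩ := ht₁
  obtain ⟨ht₂0, ht₂1⟩ := ht₂
  obtain ⟨ht₃0, ht₃1⟩ := ht₃
  obtain ⟨hu₁0, hu₁1⟩ := hu₁
  obtain ⟨hu₂0, hu₂1⟩ := hu₂
  obtain ⟨hu₃0, hu₃1⟩ := hu₃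
  -- endpoint distinctness
  have hA23 : A₂ ≠ A₃ := hB₁.left_ne_right
  have hA13 : A₁ ≠ A₃ := hB₂.left_ne_right
  have hA21 : A₂ ≠ A₁ := hB₃.left_ne_right
  have hB32 : B₃ ≠ B₂ := hC₁.left_ne_right
  have hB13 : B₁ ≠ B₃ := hC₂.left_ne_right
  have hB21 : B₂ ≠ B₁ := hC₃.left_ne_right
  have hA32 : A₃ ≠ A₂ := hA23.symm
  -- u₃ = t₃
  have e₃ : u₃ = t₃ := by
    refine (param_eq ht₃0 ht₃1 hu₃0 hu₃1 ?_).symm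
    rw [← ratio_aux hA21 ht₃0 ht₃1, ← ratio_aux hB21 hu₃0 hu₃1, hB₃e, hC₃e]
    exact hr₃
  -- u₂ = t₂
  have e₂ : u₂ = t₂ := by
    refine (param_eq ht₂0 ht₂1 hu₂0 hu₂1 ?_).symm
    rw [← ratio_aux hA13 ht₂0 ht₂1, ← ratio_aux hB13 hu₂0 hu₂1, hB₂e, hC₂e]
    exact hr₂
  -- u₁ = 1 - t₁
  have e₁ : u₁ = 1 - t₁ := by
    have hs0 : (0:ℝ) < 1 - t₁ := by linarith
    have hs1 : (1:ℝ) - t₁ < 1 := by linarith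
    refine (param_eq hs0 hs1 hu₁0 hu₁1 ?_).symm
    have hB₁e' : AffineMap.lineMap A₃ A₂ (1 - t₁) = B₁ := by
      rw [AffineMap.lineMap_apply_one_sub]; exact hB₁e
    rw [← ratio_aux hA32 hs0 hs1, ← ratio_aux hB32 hu₁0 hu₁1, hB₁e', hC₁e]
    exact hr₁
  subst e₁ e₂ e₃
  -- coordinate formulas
  have hb1 : ∀ i, B₁ i = t₁ * (A₃ i - A₂ i) + A₂ i := fun i => by
    rw [← hB₁e]; simp [AffineMap.lineMap_apply]
  have hb2 : ∀ i, B₂ i = u₂ * (A₃ i - A₁ i) + A₁ i := fun i => by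
    rw [← hB₂e]; simp [AffineMap.lineMap_apply]
  have hb3 : ∀ i, B₃ i = u₃ * (A₁ i - A₂ i) + A₂ i := fun i => by
    rw [← hB₃e]; simp [AffineMap.lineMap_apply]
  have hc1 : ∀ i, C₁ i = (1 - t₁) * (B₂ i - B₃ i) + B₃ i := fun i => by
    rw [← hC₁e]; simp [AffineMap.lineMap_apply]
  have hc2 : ∀ i, C₂ i = u₂ * (B₃ i - B₁ i) + B₁ i := fun i => by
    rw [← hC₂e]; simp [AffineMap.lineMap_apply]
  have hc3 : ∀ i, C₃ i = u₃ * (B₁ i - B₂ i) + B₂ i := fun i => by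
    rw [← hC₃e]; simp [AffineMap.lineMap_apply]
  have key : ((B₂ 0 - B₁ 0) * (B₃ 1 - B₁ 1) - (B₂ 1 - B₁ 1) * (B₃ 0 - B₁ 0)) ^ 2 =
      ((A₂ 0 - A₁ 0) * (A₃ 1 - A₁ 1) - (A₂ 1 - A₁ 1) * (A₃ 0 - A₁ 0)) *
      ((C₂ 0 - C₁ 0) * (C₃ 1 - C₁ 1) - (C₂ 1 - C₁ 1) * (C₃ 0 - C₁ 0)) := by
    simp only [hc1, hc2, hc3, hb1, hb2, hb3]
    ring
  unfold triArea
  rw [div_pow, div_mul_div_comm, ← abs_mul, ← key, abs_pow, sq_abs]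
  norm_num
end

section
/- Let ABC be a right triangle with the right angle at C, circumradius R, legs BC = a and AC = b. Let D be the point on line BC such that C is the midpoint of segment DB, and let C' be the orthogonal projection of D onto line AB. Then DC' = ab/R, BC' = a²/R, and if O is the midpoint of AB (the circumcenter), then OD² = 2a² + R². -/
open EuclideanGeometry Real

theorem right_triangle_pedal_point (A B C D C' : EuclideanSpace ℝ (Fin 2)) (a b R : ℝ)
    (hABC : AffineIndependent ℝ ![A, B, C])
    (hC : ∠ A C B = Real.pi / 2)
    (ha : a = dist B C) (hb : b = dist A C) (hR : R = dist A B / 2)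
    (hD : C = midpoint ℝ D B)
    (hC' : IsFoot D C' A B) :
    dist D C' = a * b / R ∧ dist B C' = a ^ 2 / R ∧
      (dist (midpoint ℝ A B) D) ^ 2 = 2 * a ^ 2 + R ^ 2 := by
  obtain ⟨hsp, horth⟩ := hC'
  -- basic setup
  have hAB : A ≠ B := hABC.injective.ne (show (0 : Fin 3) ≠ 1 by decide)
  have hRpos : 0 < R := by rw [hR]; have := dist_pos.mpr hAB; linarith
  have hann : 0 ≤ a := ha ▸ dist_nonneg
  have hbnn : 0 ≤ b := hb ▸ dist_nonneg
  have hmem : (C' -ᵥ A) +ᵥ A ∈ line[ℝ, A, B] := by simpa using hsp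
  obtain ⟨t, ht⟩ := (vadd_left_mem_affineSpan_pair).mp hmem
  simp only [vsub_eq_sub] at ht
  have ht' : C' = t • (B - A) + A := by rw [ht]; abel
  have hperp : inner ℝ (A - C) (B - C) = (0:ℝ) := by
    rw [EuclideanGeometry.angle, ← InnerProductGeometry.inner_eq_zero_iff_angle_eq_pi_div_two] at hC
    simpa using hC
  have hDeq : D = (2:ℝ) • C - B := by
    have h2 : (2:ℝ) • C = D + B := by rw [hD, two_smul, midpoint_add_self]
    rw [h2]; module
  set u := A - C with hu
  set v := B - A with hv
  set X : ℝ := inner ℝ u u with hX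
  set Y : ℝ := inner ℝ u v with hY
  set Y' : ℝ := inner ℝ v u with hY''
  set Z : ℝ := inner ℝ v v with hZ
  -- scalar facts
  have hXb : X = b ^ 2 := by
    rw [hX, real_inner_self_eq_norm_sq, hu, ← dist_eq_norm, hb]
  have hZR : Z = 4 * R ^ 2 := by
    rw [hZ, real_inner_self_eq_norm_sq, hv, ← dist_eq_norm, dist_comm, hR]; ring
  have hBC : B - C = u + v := by rw [hu, hv]; abel
  have hab : a ^ 2 = 4 * R ^ 2 - b ^ 2 := by
    have : a ^ 2 = inner ℝ (B - C) (B - C) := by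
      rw [real_inner_self_eq_norm_sq, ← dist_eq_norm, ha]
    rw [hBC] at this
    simp only [inner_add_left, inner_add_right, ← hX, ← hY, ← hY'', ← hZ] at this
    have hpe : X + Y = 0 := by
      have := hperp; rw [hBC] at this
      simpa only [inner_add_right, ← hX, ← hY] using this
    have hcomm : Y' = Y := real_inner_comm u v
    rw [this]; rw [hXb, hZR] at *; linarith [hpe, hcomm]
  have hpe : Y = -b ^ 2 := by
    have h := hperp; rw [hBC] at h
    simp only [inner_add_right, ← hX, ← hY] at h
    rw [hXb] at h; linarith
  have hpe' : Y' = -b ^ 2 := by rw [show Y' = Y from real_inner_comm u v, hpe]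
  -- the foot parameter
  have hDC' : D - C' = -((2:ℝ) • u) - (1 + t) • v := by
    rw [hDeq, ht', hu, hv]; module
  have htv : t = b ^ 2 / (2 * R ^ 2) - 1 := by
    have h := horth
    rw [hDC'] at h
    simp only [inner_sub_left, inner_neg_left, real_inner_smul_left, ← hY, ← hZ] at h
    rw [hpe, hZR] at h
    have hR2 : (R:ℝ) ^ 2 ≠ 0 := by positivity
    field_simp at h ⊢
    linarith
  -- goal 1
  have e1 : (dist D C') ^ 2 = 4 * X + 2 * (1 + t) * Y + 2 * (1 + t) * Y' + (1 + t) ^ 2 * Z := by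
    rw [dist_eq_norm, ← real_inner_self_eq_norm_sq, hDC']
    simp only [inner_sub_left, inner_sub_right, inner_neg_left, inner_neg_right,
      real_inner_smul_left, real_inner_smul_right, ← hX, ← hY, ← hY'', ← hZ]
    ring
  have hR0 : (R:ℝ) ≠ 0 := ne_of_gt hRpos
  have g1 : dist D C' = a * b / R := by
    have hsq : (dist D C') ^ 2 = (a * b / R) ^ 2 := by
      rw [e1, hXb, hZR, hpe, hpe', htv, div_pow, mul_pow, hab]
      field_simp
      ring
    have h1 : 0 ≤ dist D C' := dist_nonneg
    have h2 : 0 ≤ a * b / R := by positivity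
    rw [← Real.sqrt_sq h1, hsq, Real.sqrt_sq h2]
  -- goal 2
  have hBC' : B - C' = (1 - t) • v := by rw [ht', hv]; module
  have g2 : dist B C' = a ^ 2 / R := by
    have e2 : (dist B C') ^ 2 = (1 - t) ^ 2 * Z := by
      rw [dist_eq_norm, ← real_inner_self_eq_norm_sq, hBC']
      simp only [real_inner_smul_left, real_inner_smul_right, ← hZ]; ring
    have hsq : (dist B C') ^ 2 = (a ^ 2 / R) ^ 2 := by
      rw [e2, hZR, htv, div_pow, hab]
      field_simp
      ring
    have h1 : 0 ≤ dist B C' := dist_nonneg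
    have h2 : 0 ≤ a ^ 2 / R := by positivity
    rw [← Real.sqrt_sq h1, hsq, Real.sqrt_sq h2]
  -- goal 3
  have hOD : midpoint ℝ A B - D = (2:ℝ) • u + (3/2 : ℝ) • v := by
    have hm : midpoint ℝ A B = (2⁻¹ : ℝ) • (A + B) := by
      rw [midpoint_eq_smul_add, invOf_eq_inv]
    rw [hm, hDeq, hu, hv]; module
  have g3 : (dist (midpoint ℝ A B) D) ^ 2 = 2 * a ^ 2 + R ^ 2 := by
    rw [dist_eq_norm, ← real_inner_self_eq_norm_sq, hOD]
    simp only [inner_add_left, inner_add_right, real_inner_smul_left, real_inner_smul_right,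
      ← hX, ← hY, ← hY'', ← hZ]
    rw [hXb, hZR, hpe, hpe', hab]; ring
  exact ⟨g1, g2, g3⟩
end

section
/- Let ABC be a right triangle with the right angle at C, circumcenter O (the midpoint of AB), circumradius R, and legs BC = a, AC = b. Let D be the reflection of B over C, and let C' be the orthogonal projection of D onto line AB. Then the area of triangle DCC' equals a³b/(4R²), and consequently area(DCC')/area(ABC) = a²/(2R²) = (OD² − R²)/(4R²). -/
open EuclideanGeometry Real

private lemma abs_eq_of_sq_eq {x c : ℝ} (h : x ^ 2 = c ^ 2) (hc : 0 ≤ c) : |x| = c := by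
  rw [← abs_of_nonneg hc]
  exact (sq_eq_sq_iff_abs_eq_abs x c).mp h

set_option maxHeartbeats 1200000 in
theorem right_triangle_pedal_area (A B C D C' : EuclideanSpace ℝ (Fin 2)) (a b R : ℝ)
    (hABC : AffineIndependent ℝ ![A, B, C])
    (hC : ∠ A C B = Real.pi / 2)
    (ha : a = dist B C) (hb : b = dist A C) (hR : R = dist A B / 2)
    (hD : C = midpoint ℝ D B)
    (hC' : IsFoot D C' A B) :
    triArea D C C' = a ^ 3 * b / (4 * R ^ 2) ∧
      triArea D C C' / triArea A B C = a ^ 2 / (2 * R ^ 2) ∧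
      a ^ 2 / (2 * R ^ 2) = ((dist (midpoint ℝ A B) D) ^ 2 - R ^ 2) / (4 * R ^ 2) := by
  -- coordinates for D
  have hd0 : D 0 = 2 * C 0 - B 0 := by
    have := congrFun (congrArg (fun x : EuclideanSpace ℝ (Fin 2) => (x : Fin 2 → ℝ)) hD) 0
    simp [midpoint_eq_smul_add, PiLp.smul_apply, PiLp.add_apply] at this
    linarith
  have hd1 : D 1 = 2 * C 1 - B 1 := by
    have := congrFun (congrArg (fun x : EuclideanSpace ℝ (Fin 2) => (x : Fin 2 → ℝ)) hD) 1
    simp [midpoint_eq_smul_add, PiLp.smul_apply, PiLp.add_apply] at this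
    linarith
  -- coordinates for C'
  obtain ⟨t, htl⟩ : ∃ t : ℝ, t • (B -ᵥ A) = C' -ᵥ A := by
    refine vadd_left_mem_affineSpan_pair.mp
      (show (C' -ᵥ A) +ᵥ A ∈ affineSpan ℝ ({A, B} : Set (EuclideanSpace ℝ (Fin 2))) from ?_)
    rw [vsub_vadd]; exact hC'.1
  have hc'0 : C' 0 = A 0 + t * (B 0 - A 0) := by
    have := congrArg (fun x : EuclideanSpace ℝ (Fin 2) => x 0) htl
    simp [PiLp.smul_apply, PiLp.sub_apply] at this
    linarith
  have hc'1 : C' 1 = A 1 + t * (B 1 - A 1) := by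
    have := congrArg (fun x : EuclideanSpace ℝ (Fin 2) => x 1) htl
    simp [PiLp.smul_apply, PiLp.sub_apply] at this
    linarith
  -- right angle
  have hperp : (A 0 - C 0) * (B 0 - C 0) + (A 1 - C 1) * (B 1 - C 1) = 0 := by
    have h := (InnerProductGeometry.inner_eq_zero_iff_angle_eq_pi_div_two (A -ᵥ C) (B -ᵥ C)).mpr hC
    simp [PiLp.inner_apply, Fin.sum_univ_two, RCLike.inner_apply, PiLp.sub_apply] at h
    linear_combination h
  -- distances squared
  have dist_sq : ∀ X Y : EuclideanSpace ℝ (Fin 2),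
      dist X Y ^ 2 = (X 0 - Y 0) ^ 2 + (X 1 - Y 1) ^ 2 := by
    intro X Y
    rw [dist_eq_norm, EuclideanSpace.norm_eq, Real.sq_sqrt (by positivity)]
    simp [Fin.sum_univ_two, sq_abs, PiLp.sub_apply]
  have hasq : a ^ 2 = (B 0 - C 0) ^ 2 + (B 1 - C 1) ^ 2 := by rw [ha, dist_sq]
  have hbsq : b ^ 2 = (A 0 - C 0) ^ 2 + (A 1 - C 1) ^ 2 := by rw [hb, dist_sq]
  have hRsq : 4 * R ^ 2 = (A 0 - B 0) ^ 2 + (A 1 - B 1) ^ 2 := by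
    rw [hR, ← dist_sq]; ring
  have h4R : 4 * R ^ 2 = a ^ 2 + b ^ 2 := by
    linear_combination hRsq - hasq - hbsq - 2 * hperp
  -- foot condition
  have hfoot : (D 0 - C' 0) * (B 0 - A 0) + (D 1 - C' 1) * (B 1 - A 1) = 0 := by
    have h := hC'.2
    simp [PiLp.inner_apply, Fin.sum_univ_two, RCLike.inner_apply, PiLp.sub_apply] at h
    linear_combination h
  rw [hd0, hd1, hc'0, hc'1] at hfoot
  have ht2 : t * (a ^ 2 + b ^ 2) = b ^ 2 - a ^ 2 := by
    linear_combination (1 + t) * hasq + (t - 1) * hbsq - hfoot + 2 * t * hperp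
  -- positivity
  have hiAC : A ≠ C := by
    intro h
    have := hABC.injective (show ![A,B,C] 0 = ![A,B,C] 2 by simpa using h)
    simp at this
  have hiBC : B ≠ C := by
    intro h
    have := hABC.injective (show ![A,B,C] 1 = ![A,B,C] 2 by simpa using h)
    simp at this
  have hapos : 0 < a := ha ▸ dist_pos.mpr hiBC
  have hbpos : 0 < b := hb ▸ dist_pos.mpr hiAC
  have habpos : 0 < a ^ 2 + b ^ 2 := by positivity
  have hRpos : 0 < R ^ 2 := by nlinarith
  -- cross product squared
  have hcr : ((B 0 - C 0) * (A 1 - C 1) - (B 1 - C 1) * (A 0 - C 0)) ^ 2 = a ^ 2 * b ^ 2 := by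
    linear_combination (-((A 0 - C 0) * (B 0 - C 0) + (A 1 - C 1) * (B 1 - C 1))) * hperp
      - ((A 0 - C 0) ^ 2 + (A 1 - C 1) ^ 2) * hasq - a ^ 2 * hbsq
  have h1t : (1 - t) * (a ^ 2 + b ^ 2) = 2 * a ^ 2 := by linarith
  have h1tpos : 0 < 1 - t := by nlinarith
  -- area DCC'
  have hX : |(C 0 - D 0) * (C' 1 - D 1) - (C 1 - D 1) * (C' 0 - D 0)| = (1 - t) * (a * b) := by
    refine abs_eq_of_sq_eq ?_ (by positivity)
    rw [hd0, hd1, hc'0, hc'1]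
    linear_combination (1 - t) ^ 2 * hcr
  have hY : |(B 0 - A 0) * (C 1 - A 1) - (B 1 - A 1) * (C 0 - A 0)| = a * b := by
    refine abs_eq_of_sq_eq ?_ (by positivity)
    linear_combination hcr
  have hA1 : triArea D C C' = (1 - t) * (a * b) / 2 := by
    simp only [triArea]; rw [hX]
  have hA2 : triArea A B C = a * b / 2 := by
    simp only [triArea]; rw [hY]
  refine ⟨?_, ?_, ?_⟩
  · rw [hA1]
    rw [div_eq_div_iff (by norm_num) (by positivity)]
    linear_combination a * b * (1 - t) * h4R + a * b * h1t
  · rw [hA1, hA2]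
    have habne : a * b ≠ 0 := by positivity
    have hq : (1 - t) * (a * b) / 2 / (a * b / 2) = 1 - t := by
      field_simp
    rw [hq, eq_div_iff (by positivity)]
    linear_combination (1 - t) / 2 * h4R + (1 / 2) * h1t
  · have hdM : dist (midpoint ℝ A B) D ^ 2 = (b ^ 2 + 9 * a ^ 2) / 4 := by
      rw [dist_sq]
      have hm0 : midpoint ℝ A B 0 = (A 0 + B 0) / 2 := by
        simp [midpoint_eq_smul_add, PiLp.smul_apply, PiLp.add_apply]; ring
      have hm1 : midpoint ℝ A B 1 = (A 1 + B 1) / 2 := by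
        simp [midpoint_eq_smul_add, PiLp.smul_apply, PiLp.add_apply]; ring
      rw [hm0, hm1, hd0, hd1]
      linear_combination (-9 / 4) * hasq + (-1 / 4) * hbsq + (3 / 2) * hperp
    rw [show (dist (midpoint ℝ A B) D) ^ 2 - R ^ 2 = 2 * a ^ 2 by rw [hdM]; linarith]
    rw [div_eq_div_iff (by positivity) (by positivity)]
    ring
end

section
/- Let ABC be a triangle and P a point not on its circumcircle, with pedal triangle A'B'C' (projections of P onto BC, CA, AB). Then triangle A'B'C' is nondegenerate (A', B', C' are not collinear). -/
open EuclideanGeometry Real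

lemma collinear_iff_cross (X Y Z : EuclideanSpace ℝ (Fin 2)) :
    Collinear ℝ ({X, Y, Z} : Set (EuclideanSpace ℝ (Fin 2))) ↔
      (Y 0 - X 0) * (Z 1 - X 1) - (Y 1 - X 1) * (Z 0 - X 0) = 0 := by
  constructor
  · intro h
    obtain ⟨v, hv⟩ := (collinear_iff_of_mem (Set.mem_insert X {Y, Z})).1 h
    obtain ⟨rY, hrY⟩ := hv Y (by simp)
    obtain ⟨rZ, hrZ⟩ := hv Z (by simp)
    have hY0 : Y 0 = rY * v 0 + X 0 := by rw [hrY]; rfl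
    have hY1 : Y 1 = rY * v 1 + X 1 := by rw [hrY]; rfl
    have hZ0 : Z 0 = rZ * v 0 + X 0 := by rw [hrZ]; rfl
    have hZ1 : Z 1 = rZ * v 1 + X 1 := by rw [hrZ]; rfl
    rw [hY0, hY1, hZ0, hZ1]; ring
  · intro h
    rcases eq_or_ne Y X with hXY | hXY
    · rw [hXY, Set.insert_idem]
      exact collinear_pair ℝ X Z
    · have hn : (Y 0 - X 0) ^ 2 + (Y 1 - X 1) ^ 2 ≠ 0 := by
        intro h0
        apply hXY
        have h00 : Y 0 - X 0 = 0 := by nlinarith [sq_nonneg (Y 0 - X 0), sq_nonneg (Y 1 - X 1)]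
        have h11 : Y 1 - X 1 = 0 := by nlinarith [sq_nonneg (Y 0 - X 0), sq_nonneg (Y 1 - X 1)]
        ext i
        fin_cases i
        · show Y 0 = X 0; linarith
        · show Y 1 = X 1; linarith
      apply (collinear_iff_of_mem (Set.mem_insert X {Y, Z})).2
      refine ⟨Y - X, fun p hp => ?_⟩
      have hx : ∃ r : ℝ, X = r • (Y - X) +ᵥ X := ⟨0, by simp⟩
      have hy : ∃ r : ℝ, Y = r • (Y - X) +ᵥ X := by
        refine ⟨1, ?_⟩
        ext i
        have : ((1:ℝ) • (Y - X) +ᵥ X) i = 1 * (Y i - X i) + X i := rfl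
        rw [this]; ring
      have hz : ∃ r : ℝ, Z = r • (Y - X) +ᵥ X := by
        refine ⟨((Z 0 - X 0) * (Y 0 - X 0) + (Z 1 - X 1) * (Y 1 - X 1)) /
          ((Y 0 - X 0) ^ 2 + (Y 1 - X 1) ^ 2), ?_⟩
        ext i
        have hri : ∀ r : ℝ, (r • (Y - X) +ᵥ X) i = r * (Y i - X i) + X i := fun r => rfl
        rw [hri]
        fin_cases i
        · show Z 0 = _ / _ * (Y 0 - X 0) + X 0
          rw [div_mul_eq_mul_div, eq_comm, div_add' _ _ _ hn, div_eq_iff hn]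
          linear_combination (Y 1 - X 1) * h
        · show Z 1 = _ / _ * (Y 1 - X 1) + X 1
          rw [div_mul_eq_mul_div, eq_comm, div_add' _ _ _ hn, div_eq_iff hn]
          linear_combination (-(Y 0 - X 0)) * h
      have hp' : p = X ∨ p = Y ∨ p = Z := by simpa using hp
      rcases hp' with h1 | h1 | h1 <;> rw [h1]
      · exact hx
      · exact hy
      · exact hz

set_option maxHeartbeats 2000000 in
theorem pedal_nondegenerate (A B C O P A' B' C' : EuclideanSpace ℝ (Fin 2)) (R : ℝ)
    (hABC : AffineIndependent ℝ ![A, B, C])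
    (hOA : dist O A = R) (hOB : dist O B = R) (hOC : dist O C = R)
    (hP : dist O P ≠ R)
    (hA' : IsFoot P A' B C) (hB' : IsFoot P B' C A) (hC' : IsFoot P C' A B) :
    ¬ Collinear ℝ ({A', B', C'} : Set (EuclideanSpace ℝ (Fin 2))) := by
  obtain ⟨hA'mem, hA'inner⟩ := hA'
  obtain ⟨hB'mem, hB'inner⟩ := hB'
  obtain ⟨hC'mem, hC'inner⟩ := hC'
  obtain ⟨ta, hta⟩ := vadd_left_mem_affineSpan_pair.1
    (show (A' -ᵥ B) +ᵥ B ∈ affineSpan ℝ ({B, C} : Set (EuclideanSpace ℝ (Fin 2))) by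
      rwa [vsub_vadd])
  obtain ⟨tb, htb⟩ := vadd_left_mem_affineSpan_pair.1
    (show (B' -ᵥ C) +ᵥ C ∈ affineSpan ℝ ({C, A} : Set (EuclideanSpace ℝ (Fin 2))) by
      rwa [vsub_vadd])
  obtain ⟨tc, htc⟩ := vadd_left_mem_affineSpan_pair.1
    (show (C' -ᵥ A) +ᵥ A ∈ affineSpan ℝ ({A, B} : Set (EuclideanSpace ℝ (Fin 2))) by
      rwa [vsub_vadd])
  have hta0 : ta * (C 0 - B 0) = A' 0 - B 0 := congrFun (congrArg WithLp.ofLp hta) 0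
  have hta1 : ta * (C 1 - B 1) = A' 1 - B 1 := congrFun (congrArg WithLp.ofLp hta) 1
  have htb0 : tb * (A 0 - C 0) = B' 0 - C 0 := congrFun (congrArg WithLp.ofLp htb) 0
  have htb1 : tb * (A 1 - C 1) = B' 1 - C 1 := congrFun (congrArg WithLp.ofLp htb) 1
  have htc0 : tc * (B 0 - A 0) = C' 0 - A 0 := congrFun (congrArg WithLp.ofLp htc) 0
  have htc1 : tc * (B 1 - A 1) = C' 1 - A 1 := congrFun (congrArg WithLp.ofLp htc) 1
  have ia : (P 0 - A' 0) * (C 0 - B 0) + (P 1 - A' 1) * (C 1 - B 1) = 0 := by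
    simpa [PiLp.inner_apply, Fin.sum_univ_two, RCLike.inner_apply, conj_trivial, mul_comm]
      using hA'inner
  have ib : (P 0 - B' 0) * (A 0 - C 0) + (P 1 - B' 1) * (A 1 - C 1) = 0 := by
    simpa [PiLp.inner_apply, Fin.sum_univ_two, RCLike.inner_apply, conj_trivial, mul_comm]
      using hB'inner
  have ic : (P 0 - C' 0) * (B 0 - A 0) + (P 1 - C' 1) * (B 1 - A 1) = 0 := by
    simpa [PiLp.inner_apply, Fin.sum_univ_two, RCLike.inner_apply, conj_trivial, mul_comm]
      using hC'inner
  have sq_dist : ∀ U V : EuclideanSpace ℝ (Fin 2),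
      dist U V ^ 2 = (U 0 - V 0) ^ 2 + (U 1 - V 1) ^ 2 := by
    intro U V
    rw [EuclideanSpace.dist_eq, Real.sq_sqrt (by positivity)]
    simp [Fin.sum_univ_two, Real.dist_eq, sq_abs]
  have h1 : (O 0 - A 0) ^ 2 + (O 1 - A 1) ^ 2 = R ^ 2 := by rw [← sq_dist, hOA]
  have h2 : (O 0 - B 0) ^ 2 + (O 1 - B 1) ^ 2 = R ^ 2 := by rw [← sq_dist, hOB]
  have h3 : (O 0 - C 0) ^ 2 + (O 1 - C 1) ^ 2 = R ^ 2 := by rw [← sq_dist, hOC]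
  have hR0 : 0 ≤ R := hOA ▸ dist_nonneg
  have hqP : (O 0 - P 0) ^ 2 + (O 1 - P 1) ^ 2 ≠ R ^ 2 := by
    intro hq
    apply hP
    have hd2 : dist O P ^ 2 = R ^ 2 := by rw [sq_dist]; exact hq
    calc dist O P = √(dist O P ^ 2) := (Real.sqrt_sq dist_nonneg).symm
      _ = √(R ^ 2) := by rw [hd2]
      _ = R := Real.sqrt_sq hR0
  have hncol : ¬ Collinear ℝ ({A, B, C} : Set (EuclideanSpace ℝ (Fin 2))) :=
    affineIndependent_iff_not_collinear_set.1 hABC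
  have hcr : (B 0 - A 0) * (C 1 - A 1) - (B 1 - A 1) * (C 0 - A 0) ≠ 0 :=
    fun hc => hncol ((collinear_iff_cross A B C).2 hc)
  have hS : (C 0 - B 0) * (A 1 - C 1) - (C 1 - B 1) * (A 0 - C 0) ≠ 0 :=
    fun hs => hcr (by linear_combination hs)
  have hna : (C 0 - B 0) ^ 2 + (C 1 - B 1) ^ 2 ≠ 0 := by
    intro h0
    have e0 : C 0 - B 0 = 0 := by
      have hx : (C 0 - B 0) ^ 2 = 0 := by linarith [sq_nonneg (C 0 - B 0), sq_nonneg (C 1 - B 1)]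
      exact pow_eq_zero_iff two_ne_zero |>.1 hx
    have e1 : C 1 - B 1 = 0 := by
      have hx : (C 1 - B 1) ^ 2 = 0 := by linarith [sq_nonneg (C 0 - B 0), sq_nonneg (C 1 - B 1)]
      exact pow_eq_zero_iff two_ne_zero |>.1 hx
    exact hS (by linear_combination (A 1 - C 1) * e0 - (A 0 - C 0) * e1)
  have hnb : (A 0 - C 0) ^ 2 + (A 1 - C 1) ^ 2 ≠ 0 := by
    intro h0
    have e0 : A 0 - C 0 = 0 := by
      have hx : (A 0 - C 0) ^ 2 = 0 := by linarith [sq_nonneg (A 0 - C 0), sq_nonneg (A 1 - C 1)]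
      exact pow_eq_zero_iff two_ne_zero |>.1 hx
    have e1 : A 1 - C 1 = 0 := by
      have hx : (A 1 - C 1) ^ 2 = 0 := by linarith [sq_nonneg (A 0 - C 0), sq_nonneg (A 1 - C 1)]
      exact pow_eq_zero_iff two_ne_zero |>.1 hx
    exact hS (by linear_combination (C 0 - B 0) * e1 - (C 1 - B 1) * e0)
  have hnc : (B 0 - A 0) ^ 2 + (B 1 - A 1) ^ 2 ≠ 0 := by
    intro h0
    have e0 : B 0 - A 0 = 0 := by
      have hx : (B 0 - A 0) ^ 2 = 0 := by linarith [sq_nonneg (B 0 - A 0), sq_nonneg (B 1 - A 1)]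
      exact pow_eq_zero_iff two_ne_zero |>.1 hx
    have e1 : B 1 - A 1 = 0 := by
      have hx : (B 1 - A 1) ^ 2 = 0 := by linarith [sq_nonneg (B 0 - A 0), sq_nonneg (B 1 - A 1)]
      exact pow_eq_zero_iff two_ne_zero |>.1 hx
    exact hcr (by linear_combination (C 1 - A 1) * e0 - (C 0 - A 0) * e1)
  have ea : ta * ((C 0 - B 0) ^ 2 + (C 1 - B 1) ^ 2)
      = (P 0 - B 0) * (C 0 - B 0) + (P 1 - B 1) * (C 1 - B 1) := by
    linear_combination (C 0 - B 0) * hta0 + (C 1 - B 1) * hta1 - ia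
  have eb : tb * ((A 0 - C 0) ^ 2 + (A 1 - C 1) ^ 2)
      = (P 0 - C 0) * (A 0 - C 0) + (P 1 - C 1) * (A 1 - C 1) := by
    linear_combination (A 0 - C 0) * htb0 + (A 1 - C 1) * htb1 - ib
  have ec : tc * ((B 0 - A 0) ^ 2 + (B 1 - A 1) ^ 2)
      = (P 0 - A 0) * (B 0 - A 0) + (P 1 - A 1) * (B 1 - A 1) := by
    linear_combination (B 0 - A 0) * htc0 + (B 1 - A 1) * htc1 - ic
  rw [collinear_iff_cross]
  intro hcol
  have hA'0 : A' 0 = B 0 + ta * (C 0 - B 0) := by linarith [hta0]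
  have hA'1 : A' 1 = B 1 + ta * (C 1 - B 1) := by linarith [hta1]
  have hB'0 : B' 0 = C 0 + tb * (A 0 - C 0) := by linarith [htb0]
  have hB'1 : B' 1 = C 1 + tb * (A 1 - C 1) := by linarith [htb1]
  have hC'0 : C' 0 = A 0 + tc * (B 0 - A 0) := by linarith [htc0]
  have hC'1 : C' 1 = A 1 + tc * (B 1 - A 1) := by linarith [htc1]
  rw [hA'0, hA'1, hB'0, hB'1, hC'0, hC'1] at hcol
  have hSQ : ((C 0 - B 0) * (A 1 - C 1) - (C 1 - B 1) * (A 0 - C 0)) *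
      (1 - ta - tb - tc + ta * tb + tb * tc + tc * ta) = 0 := by
    linear_combination hcol
  have hQ : 1 - ta - tb - tc + ta * tb + tb * tc + tc * ta = 0 :=
    (mul_eq_zero.1 hSQ).resolve_left hS
  have main : (1 - ta - tb - tc + ta * tb + tb * tc + tc * ta) *
      (((C 0 - B 0) ^ 2 + (C 1 - B 1) ^ 2) * ((A 0 - C 0) ^ 2 + (A 1 - C 1) ^ 2) *
        ((B 0 - A 0) ^ 2 + (B 1 - A 1) ^ 2))
      = (R ^ 2 - ((O 0 - P 0) ^ 2 + (O 1 - P 1) ^ 2)) *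
        ((C 0 - B 0) * (A 1 - C 1) - (C 1 - B 1) * (A 0 - C 0)) ^ 2 := by
    linear_combination
      (-(((A 0 - C 0) ^ 2 + (A 1 - C 1) ^ 2) * ((B 0 - A 0) ^ 2 + (B 1 - A 1) ^ 2))
        + ((B 0 - A 0) ^ 2 + (B 1 - A 1) ^ 2) *
          ((P 0 - C 0) * (A 0 - C 0) + (P 1 - C 1) * (A 1 - C 1))
        + ((A 0 - C 0) ^ 2 + (A 1 - C 1) ^ 2) * tc * ((B 0 - A 0) ^ 2 + (B 1 - A 1) ^ 2)) * ea
      + (-(((C 0 - B 0) ^ 2 + (C 1 - B 1) ^ 2) * ((B 0 - A 0) ^ 2 + (B 1 - A 1) ^ 2))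
        + ((B 0 - A 0) ^ 2 + (B 1 - A 1) ^ 2) * ta * ((C 0 - B 0) ^ 2 + (C 1 - B 1) ^ 2)
        + ((C 0 - B 0) ^ 2 + (C 1 - B 1) ^ 2) *
          ((P 0 - A 0) * (B 0 - A 0) + (P 1 - A 1) * (B 1 - A 1))) * eb
      + (-(((C 0 - B 0) ^ 2 + (C 1 - B 1) ^ 2) * ((A 0 - C 0) ^ 2 + (A 1 - C 1) ^ 2))
        + ((C 0 - B 0) ^ 2 + (C 1 - B 1) ^ 2) * tb * ((A 0 - C 0) ^ 2 + (A 1 - C 1) ^ 2)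
        + ((A 0 - C 0) ^ 2 + (A 1 - C 1) ^ 2) *
          ((P 0 - B 0) * (C 0 - B 0) + (P 1 - B 1) * (C 1 - B 1))) * ec
      + (((C 0 - B 0) * (A 1 - C 1) - (C 1 - B 1) * (A 0 - C 0)) *
          ((B 0 - P 0) * (C 1 - P 1) - (B 1 - P 1) * (C 0 - P 0))) * h1
      + (((C 0 - B 0) * (A 1 - C 1) - (C 1 - B 1) * (A 0 - C 0)) *
          ((C 0 - P 0) * (A 1 - P 1) - (C 1 - P 1) * (A 0 - P 0))) * h2
      + (((C 0 - B 0) * (A 1 - C 1) - (C 1 - B 1) * (A 0 - C 0)) *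
          ((A 0 - P 0) * (B 1 - P 1) - (A 1 - P 1) * (B 0 - P 0))) * h3
  rw [hQ, zero_mul] at main
  rcases mul_eq_zero.1 main.symm with hm | hm
  · exact hqP (by linarith)
  · exact hS (pow_eq_zero_iff (n := 2) (by norm_num) |>.1 hm)
end

section
/- Let ABC be a triangle, K a point inside it, and K₁ the isogonal conjugate of K with respect to ABC. Let E and F be the orthogonal projections of K₁ onto lines CA and AB respectively. Then the line AK is perpendicular to the line EF. -/
open EuclideanGeometry Real

/-- `K₁` is the isogonal conjugate of `K` with respect to triangle `ABC`. -/
def IsIsogonalConj (A B C K K₁ : EuclideanSpace ℝ (Fin 2)) : Prop :=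
  ∠ K₁ A B = ∠ K A C ∧ ∠ K₁ B C = ∠ K B A ∧ ∠ K₁ C A = ∠ K C B

noncomputable section
namespace IsogAux

abbrev V := EuclideanSpace ℝ (Fin 2)

def crs (x y : V) : ℝ := x 0 * y 1 - x 1 * y 0

lemma inner2 (x y : V) : (inner ℝ x y : ℝ) = x 0 * y 0 + x 1 * y 1 := by
  simp [PiLp.inner_apply, Fin.sum_univ_two]; ring

lemma normsq (x : V) : ‖x‖ ^ 2 = x 0 ^ 2 + x 1 ^ 2 := by
  rw [← real_inner_self_eq_norm_sq, inner2]; ring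

lemma lagr (x y : V) : crs x y ^ 2 + (inner ℝ x y : ℝ) ^ 2 = ‖x‖ ^ 2 * ‖y‖ ^ 2 := by
  rw [inner2, normsq, normsq, crs]; ring

lemma idI (q m a : V) :
    (inner ℝ m a : ℝ) * ‖q‖ ^ 2 = (inner ℝ q m : ℝ) * (inner ℝ q a : ℝ) + crs q m * crs q a := by
  rw [inner2, inner2, inner2, normsq, crs, crs]; ring

lemma idII (q a m : V) :
    crs a m * ‖q‖ ^ 2 = crs q m * (inner ℝ q a : ℝ) - (inner ℝ q m : ℝ) * crs q a := by
  rw [inner2, inner2, normsq, crs, crs, crs]; ring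

lemma sub_apply (x y : V) (i : Fin 2) : (x - y) i = x i - y i := rfl
lemma neg_apply (x : V) (i : Fin 2) : (-x) i = -(x i) := rfl

lemma add_apply (x y : V) (i : Fin 2) : (x + y) i = x i + y i := rfl
lemma smul_apply (c : ℝ) (x : V) (i : Fin 2) : (c • x) i = c * x i := rfl
lemma crs_zero_left (y : V) : crs 0 y = 0 := by simp [crs]
lemma crs_zero_right (x : V) : crs x 0 = 0 := by simp [crs]
lemma crs_self (x : V) : crs x x = 0 := by simp [crs]; ring

lemma ne_zero_of_crs {x y : V} (h : crs x y ≠ 0) : x ≠ 0 ∧ y ≠ 0 := by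
  constructor <;> rintro rfl <;> simp [crs] at h

lemma rvl {c0 s0 cm sm cx sx : ℝ} (h0 : c0^2+s0^2=1) (hm : cm^2+sm^2=1) (hx : cx^2+sx^2=1)
    (hsm : 0 < sm) (hins : sm*c0 - cm*s0 < 0)
    (hcx : cx = cm*c0 + sm*s0) (hside : 0 < sx*c0 - cx*s0) : sx < 0 := by
  have hD : 0 < cm*s0 - sm*c0 := by linarith
  have hsq : (sx - (cm*s0 - sm*c0)) * (sx + (cm*s0 - sm*c0)) = 0 := by
    linear_combination hx - (cx + (cm*c0+sm*s0)) * hcx - (c0^2+s0^2) * hm - h0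
  rcases mul_eq_zero.mp hsq with h | h
  · exfalso
    have h' : sx = cm*s0 - sm*c0 := by linarith
    have : sx*c0 - cx*s0 = -sm := by
      rw [h', hcx]; linear_combination (-sm) * h0
    linarith
  · linarith

/- real fraction helpers -/
lemma pyth_div {X Y N1 N2 : ℝ} (h1 : 0 < N1) (h2 : 0 < N2) (h : X^2+Y^2 = N1^2*N2^2) :
    (X/(N1*N2))^2 + (Y/(N1*N2))^2 = 1 := by
  field_simp; linear_combination h

lemma comb_div {Sm Ca Cm Sa D Nq Nm Na : ℝ} (hq : 0 < Nq) (hm : 0 < Nm) (ha : 0 < Na)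
    (hid : D * Nq^2 = Sm*Ca - Cm*Sa) :
    Sm/(Nq*Nm) * (Ca/(Nq*Na)) - Cm/(Nq*Nm) * (Sa/(Nq*Na)) = D*Nq^2/((Nq*Nm)*(Nq*Na)) := by
  rw [hid]; field_simp

lemma cx_div {Cx Cm Ca Sm Sa M Nq Nm Na Nx : ℝ} (hq : 0 < Nq) (hm : 0 < Nm) (ha : 0 < Na)
    (hx : 0 < Nx) (hid : M * Nq^2 = Cm*Ca + Sm*Sa) (hcos : Cx*(Nm*Na) = M*(Nx*Nq)) :
    Cx/(Nq*Nx) = Cm/(Nq*Nm) * (Ca/(Nq*Na)) + Sm/(Nq*Nm) * (Sa/(Nq*Na)) := by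
  field_simp
  linear_combination Nq * hcos + Nx * hid

/-- Vertex lemma. -/
lemma vl {q a m x : V} (hQA : 0 < crs q a) (hQM : 0 < crs q m) (hAM : crs a m < 0)
    (hAX : 0 < crs a x)
    (hcos : (inner ℝ x q : ℝ) * (‖m‖ * ‖a‖) = (inner ℝ m a : ℝ) * (‖x‖ * ‖q‖)) :
    crs q x < 0 := by
  obtain ⟨hq0, ha0⟩ := ne_zero_of_crs hQA.ne'
  obtain ⟨-, hm0⟩ := ne_zero_of_crs hQM.ne'
  obtain ⟨-, hx0⟩ := ne_zero_of_crs hAX.ne'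
  have nq : 0 < ‖q‖ := norm_pos_iff.mpr hq0
  have na : 0 < ‖a‖ := norm_pos_iff.mpr ha0
  have nm : 0 < ‖m‖ := norm_pos_iff.mpr hm0
  have nx : 0 < ‖x‖ := norm_pos_iff.mpr hx0
  rw [show (inner ℝ x q : ℝ) = (inner ℝ q x : ℝ) from (real_inner_comm x q).symm] at hcos
  have main : crs q x / (‖q‖ * ‖x‖) < 0 := by
    refine rvl (c0 := (inner ℝ q a : ℝ)/(‖q‖*‖a‖)) (s0 := crs q a/(‖q‖*‖a‖))
      (cm := (inner ℝ q m : ℝ)/(‖q‖*‖m‖)) (sm := crs q m/(‖q‖*‖m‖))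
      (cx := (inner ℝ q x : ℝ)/(‖q‖*‖x‖)) ?_ ?_ ?_ ?_ ?_ ?_ ?_
    · exact pyth_div nq na (by linear_combination lagr q a)
    · exact pyth_div nq nm (by linear_combination lagr q m)
    · exact pyth_div nq nx (by linear_combination lagr q x)
    · exact div_pos hQM (by positivity)
    · rw [comb_div nq nm na (idII q a m)]
      exact div_neg_of_neg_of_pos (by nlinarith [sq_nonneg ‖q‖, mul_pos nq nq]) (by positivity)
    · exact cx_div nq nm na nx (idI q m a) hcos
    · rw [comb_div nq nx na (idII q a x)]
      exact div_pos (by nlinarith [mul_pos nq nq]) (by positivity)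
  have hx' : crs q x = crs q x / (‖q‖*‖x‖) * (‖q‖*‖x‖) :=
    (div_mul_cancel₀ _ (by positivity)).symm
  rw [hx']
  exact mul_neg_of_neg_of_pos main (by positivity)


section core
variable {u v k w : V}

lemma core (hs : 0 < crs u v) (h1 : 0 < crs k v) (h2 : 0 < crs u k)
    (h3 : 0 < crs (v-u) (k-u))
    (hA : (inner ℝ w u : ℝ) * (‖k‖*‖v‖) = (inner ℝ k v : ℝ) * (‖w‖*‖u‖))
    (hB : (inner ℝ (w-u) (v-u) : ℝ) * (‖k-u‖*‖u‖) = (inner ℝ (k-u) (-u) : ℝ) * (‖w-u‖*‖v-u‖))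
    (hC : (inner ℝ (w-v) (-v) : ℝ) * (‖k-v‖*‖u-v‖) = (inner ℝ (k-v) (u-v) : ℝ) * (‖w-v‖*‖v‖)) :
    (inner ℝ w u : ℝ) * crs k v = crs u w * (inner ℝ k v : ℝ) := by
  obtain ⟨hu0, hv0⟩ := ne_zero_of_crs hs.ne'
  obtain ⟨hk0, -⟩ := ne_zero_of_crs h1.ne'
  have nu : 0 < ‖u‖ := norm_pos_iff.mpr hu0
  have nv : 0 < ‖v‖ := norm_pos_iff.mpr hv0
  have nk : 0 < ‖k‖ := norm_pos_iff.mpr hk0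
  have ekv : crs (k-v) (u-v) = crs (v-u) (k-u) := by
    simp only [crs, sub_apply]; ring
  -- w ≠ 0
  have hw0 : w ≠ 0 := by
    rintro rfl
    rw [zero_sub, inner_neg_neg, real_inner_self_eq_norm_sq, norm_neg] at hC
    have hvv : (0:ℝ) < ‖v‖*‖v‖ := mul_pos nv nv
    have heq : (inner ℝ (k-v) (u-v) : ℝ) = ‖k-v‖*‖u-v‖ := by
      have h' : (‖v‖*‖v‖) * (‖k-v‖*‖u-v‖ - (inner ℝ (k-v) (u-v) : ℝ)) = 0 := by
        linear_combination hC
      rcases mul_eq_zero.mp h' with h'' | h''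
      · exact absurd h'' hvv.ne'
      · linarith
    have hcrs : 0 < crs (k-v) (u-v) := by rw [ekv]; exact h3
    have hz : crs (k-v) (u-v) ^ 2 = 0 := by
      linear_combination lagr (k-v) (u-v)
        - ((inner ℝ (k-v) (u-v) : ℝ) + ‖k-v‖*‖u-v‖) * heq
    nlinarith [hz, mul_pos hcrs hcrs]
  have nw : 0 < ‖w‖ := norm_pos_iff.mpr hw0
  rw [show (inner ℝ w u : ℝ) = (inner ℝ u w : ℝ) from (real_inner_comm w u).symm] at hA ⊢
  have hsq : (crs u w * (‖k‖*‖v‖))^2 = (crs k v * (‖w‖*‖u‖))^2 := by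
    linear_combination ((‖k‖*‖v‖)^2) * lagr u w - ((‖w‖*‖u‖)^2) * lagr k v
      - ((inner ℝ u w : ℝ)*(‖k‖*‖v‖) + (inner ℝ k v : ℝ)*(‖w‖*‖u‖)) * hA
  have hfac : (crs u w * (‖k‖*‖v‖) - crs k v * (‖w‖*‖u‖))
      * (crs u w * (‖k‖*‖v‖) + crs k v * (‖w‖*‖u‖)) = 0 := by linear_combination hsq
  rcases mul_eq_zero.mp hfac with h | h
  · have h' : crs u w * (‖k‖*‖v‖) = crs k v * (‖w‖*‖u‖) := by linarith
    have key : (‖k‖*‖v‖)^2 * ((inner ℝ u w : ℝ) * crs k v - crs u w * (inner ℝ k v : ℝ)) = 0 := by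
      linear_combination (crs k v * (‖k‖*‖v‖)) * hA - ((inner ℝ k v : ℝ) * (‖k‖*‖v‖)) * h'
    have hne : ((‖k‖*‖v‖)^2 : ℝ) ≠ 0 := by positivity
    have := (mul_eq_zero.mp key).resolve_left hne
    linarith
  · exfalso
    have hlt : crs u w * (‖k‖*‖v‖) < 0 := by nlinarith [mul_pos h1 (mul_pos nw nu)]
    have hcw : crs u w < 0 := by
      rcases mul_neg_iff.mp hlt with ⟨-, h2'⟩ | ⟨h1', -⟩
      · exact absurd h2' (not_lt.mpr (by positivity))
      · exact h1'
    have hB1 : crs (v-u) (w-u) < 0 := by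
      apply vl (a := -u) (m := k-u)
      · have e : crs (v-u) (-u) = crs u v := by simp only [crs, sub_apply, neg_apply]; ring
        rw [e]; exact hs
      · exact h3
      · have e : crs (-u) (k-u) = -crs u k := by simp only [crs, sub_apply, neg_apply]; ring
        rw [e]; linarith
      · have e : crs (-u) (w-u) = -crs u w := by simp only [crs, sub_apply, neg_apply]; ring
        rw [e]; linarith
      · rw [norm_neg]; exact hB
    have hC1 : crs (-v) (w-v) < 0 := by
      apply vl (a := u-v) (m := k-v)
      · have e : crs (-v) (u-v) = crs u v := by simp only [crs, sub_apply, neg_apply]; ring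
        rw [e]; exact hs
      · have e : crs (-v) (k-v) = crs k v := by simp only [crs, sub_apply, neg_apply]; ring
        rw [e]; exact h1
      · have e : crs (u-v) (k-v) = -crs (v-u) (k-u) := by simp only [crs, sub_apply]; ring
        rw [e]; linarith
      · have e : crs (u-v) (w-v) = -crs (v-u) (w-u) := by simp only [crs, sub_apply]; ring
        rw [e]; linarith
      · rw [norm_neg]; exact hC
    have e8 : crs (-v) (w-v) = crs w v := by simp only [crs, sub_apply, neg_apply]; ring
    have e9 : crs u w + crs w v + crs (v-u) (w-u) = crs u v := by
      simp only [crs, sub_apply]; ring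
    rw [e8] at hC1
    linarith

end core

section reflect

def rf (x : V) : V := WithLp.toLp 2 ![x 1, x 0]

lemma rf_apply0 (x : V) : rf x 0 = x 1 := rfl
lemma rf_apply1 (x : V) : rf x 1 = x 0 := rfl
lemma rf_sub (x y : V) : rf (x - y) = rf x - rf y := by ext i; fin_cases i <;> rfl
lemma rf_neg (x : V) : rf (-x) = -(rf x) := by ext i; fin_cases i <;> rfl
lemma inner_rf (x y : V) : (inner ℝ (rf x) (rf y) : ℝ) = inner ℝ x y := by
  rw [inner2, inner2, rf_apply0, rf_apply0, rf_apply1, rf_apply1]; ring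
lemma crs_rf (x y : V) : crs (rf x) (rf y) = -crs x y := by
  simp only [crs, rf_apply0, rf_apply1]; ring
lemma norm_rf (x : V) : ‖rf x‖ = ‖x‖ := by
  have h : ‖rf x‖^2 = ‖x‖^2 := by
    rw [normsq, normsq, rf_apply0, rf_apply1]; ring
  exact (sq_eq_sq₀ (norm_nonneg _) (norm_nonneg _)).mp h

end reflect

lemma core' {u v k w : V} (hs : crs u v ≠ 0)
    (h1 : 0 < crs k v * crs u v) (h2 : 0 < crs u k * crs u v)
    (h3 : 0 < crs (v-u) (k-u) * crs u v)
    (hA : (inner ℝ w u : ℝ) * (‖k‖*‖v‖) = (inner ℝ k v : ℝ) * (‖w‖*‖u‖))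
    (hB : (inner ℝ (w-u) (v-u) : ℝ) * (‖k-u‖*‖u‖) = (inner ℝ (k-u) (-u) : ℝ) * (‖w-u‖*‖v-u‖))
    (hC : (inner ℝ (w-v) (-v) : ℝ) * (‖k-v‖*‖u-v‖) = (inner ℝ (k-v) (u-v) : ℝ) * (‖w-v‖*‖v‖)) :
    (inner ℝ w u : ℝ) * crs k v = crs u w * (inner ℝ k v : ℝ) := by
  rcases hs.lt_or_gt with hneg | hpos
  · have hkv : crs k v < 0 := by nlinarith
    have huk : crs u k < 0 := by nlinarith
    have hvk : crs (v-u) (k-u) < 0 := by nlinarith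
    have hA' : (inner ℝ (rf w) (rf u) : ℝ) * (‖rf k‖*‖rf v‖)
        = (inner ℝ (rf k) (rf v) : ℝ) * (‖rf w‖*‖rf u‖) := by
      rw [inner_rf, inner_rf, norm_rf, norm_rf, norm_rf, norm_rf]; exact hA
    have hB' : (inner ℝ (rf w - rf u) (rf v - rf u) : ℝ) * (‖rf k - rf u‖*‖rf u‖)
        = (inner ℝ (rf k - rf u) (-(rf u)) : ℝ) * (‖rf w - rf u‖*‖rf v - rf u‖) := by
      rw [← rf_sub, ← rf_sub, ← rf_sub, ← rf_neg, inner_rf, inner_rf,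
        norm_rf, norm_rf, norm_rf, norm_rf]
      exact hB
    have hC' : (inner ℝ (rf w - rf v) (-(rf v)) : ℝ) * (‖rf k - rf v‖*‖rf u - rf v‖)
        = (inner ℝ (rf k - rf v) (rf u - rf v) : ℝ) * (‖rf w - rf v‖*‖rf v‖) := by
      rw [← rf_sub, ← rf_sub, ← rf_sub, ← rf_neg, inner_rf, inner_rf,
        norm_rf, norm_rf, norm_rf, norm_rf]
      exact hC
    have H := core (u := rf u) (v := rf v) (k := rf k) (w := rf w)
      (by rw [crs_rf]; linarith) (by rw [crs_rf]; linarith) (by rw [crs_rf]; linarith)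
      (by rw [← rf_sub, ← rf_sub, crs_rf]; linarith) hA' hB' hC'
    rw [inner_rf, inner_rf, crs_rf, crs_rf] at H
    linarith
  · exact core hpos (by nlinarith) (by nlinarith) (by nlinarith) hA hB hC

lemma idJ (u v k w : V) :
    (inner ℝ w u : ℝ) * (inner ℝ k u : ℝ) * ‖v‖^2 - (inner ℝ w v : ℝ) * (inner ℝ k v : ℝ) * ‖u‖^2
    = crs u v * ((inner ℝ w u : ℝ) * crs k v - crs u w * (inner ℝ k v : ℝ)) := by
  rw [inner2, inner2, inner2, inner2, normsq, normsq, crs, crs, crs]; ring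

lemma ratio {x y z t : V} (h : (inner ℝ x y : ℝ)/(‖x‖*‖y‖) = (inner ℝ z t : ℝ)/(‖z‖*‖t‖))
    (hz : z ≠ 0) (ht : t ≠ 0) :
    (inner ℝ x y : ℝ) * (‖z‖*‖t‖) = (inner ℝ z t : ℝ) * (‖x‖*‖y‖) := by
  by_cases hx : ‖x‖*‖y‖ = 0
  · have h1 : (inner ℝ x y : ℝ) = 0 := by
      rcases mul_eq_zero.mp hx with h' | h' <;> rw [norm_eq_zero] at h'
      · rw [h', inner_zero_left]
      · rw [h', inner_zero_right]
    rw [h1, hx]; ring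
  · have hzt : ‖z‖*‖t‖ ≠ 0 :=
      mul_ne_zero (norm_ne_zero_iff.mpr hz) (norm_ne_zero_iff.mpr ht)
    exact (div_eq_div_iff hx hzt).mp h

end IsogAux

end  -- noncomputable section

theorem isogonal_perp (A B C K K₁ E F : EuclideanSpace ℝ (Fin 2))
    (hABC : AffineIndependent ℝ ![A, B, C])
    (hK : K ∈ interior (convexHull ℝ ({A, B, C} : Set (EuclideanSpace ℝ (Fin 2)))))
    (hK₁ : IsIsogonalConj A B C K K₁)
    (hE : IsFoot K₁ E C A) (hF : IsFoot K₁ F A B) :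
    inner ℝ (K - A) (F - E) = (0 : ℝ) := by
  classical
  obtain ⟨a1, a2, a3⟩ := hK₁
  obtain ⟨hEmem, hEperp⟩ := hE
  obtain ⟨hFmem, hFperp⟩ := hF
  -- affine basis and barycentric coordinates of K
  have htop : affineSpan ℝ (Set.range ![A, B, C]) = ⊤ := by
    rw [hABC.affineSpan_eq_top_iff_card_eq_finrank_add_one]
    simp
  let b : AffineBasis (Fin 3) ℝ (EuclideanSpace ℝ (Fin 2)) := ⟨![A, B, C], hABC, htop⟩
  have hrange : Set.range (b : Fin 3 → EuclideanSpace ℝ (Fin 2))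
      = ({A, B, C} : Set (EuclideanSpace ℝ (Fin 2))) := by
    show Set.range ![A, B, C] = _
    ext x
    constructor
    · rintro ⟨i, rfl⟩
      fin_cases i
      · exact Set.mem_insert _ _
      · exact Set.mem_insert_of_mem _ (Set.mem_insert _ _)
      · exact Set.mem_insert_of_mem _ (Set.mem_insert_of_mem _ rfl)
    · rintro (rfl | rfl | rfl)
      exacts [⟨0, rfl⟩, ⟨1, rfl⟩, ⟨2, rfl⟩]
  have hcoord : ∀ i, 0 < b.coord i K := by
    have h := b.interior_convexHull
    rw [hrange] at h
    rw [h] at hK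
    exact hK
  have hα : 0 < b.coord 0 K := hcoord 0
  have hβ : 0 < b.coord 1 K := hcoord 1
  have hγ : 0 < b.coord 2 K := hcoord 2
  set α := b.coord 0 K
  set β := b.coord 1 K
  set γ := b.coord 2 K
  have hsum : α + β + γ = 1 := by
    have h := b.sum_coord_apply_eq_one K
    rw [Fin.sum_univ_three] at h
    exact h
  have hcombo : α • A + β • B + γ • C = K := by
    have h := b.linear_combination_coord_eq_self K
    rw [Fin.sum_univ_three] at h
    exact h
  have hkc : ∀ i : Fin 2, K i - A i = β * (B i - A i) + γ * (C i - A i) := by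
    intro i
    have h := congrArg (fun x : EuclideanSpace ℝ (Fin 2) => x i) hcombo
    simp only [IsogAux.add_apply, IsogAux.smul_apply] at h
    linear_combination (-1 : ℝ) * h + A i * hsum
  -- the triangle is nondegenerate: crs (B-A) (C-A) ≠ 0
  have hnc := affineIndependent_iff_not_collinear_set.mp hABC
  have hne : IsogAux.crs (B - A) (C - A) ≠ 0 := by
    intro h0
    apply hnc
    by_cases hu : B - A = (0 : EuclideanSpace ℝ (Fin 2))
    · have hBA : B = A := sub_eq_zero.mp hu
      rw [hBA, Set.insert_comm, Set.insert_idem]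
      exact collinear_pair ℝ A C
    · have hu2 : ‖B - A‖ ^ 2 ≠ 0 := pow_ne_zero 2 (norm_ne_zero_iff.mpr hu)
      apply (collinear_iff_of_mem (Set.mem_insert A {B, C})).mpr
      refine ⟨B - A, ?_⟩
      intro p hp
      rcases hp with h | h | h
      · exact ⟨0, by rw [h]; simp⟩
      · refine ⟨1, ?_⟩
        rw [h]
        show B = (1 : ℝ) • (B - A) +ᵥ A
        simp
      · refine ⟨(inner ℝ (B - A) (C - A) : ℝ) / ‖B - A‖ ^ 2, ?_⟩
        rw [h]
        show C = _ • (B - A) +ᵥ A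
        simp only [IsogAux.crs, IsogAux.sub_apply] at h0
        have hcomp0 : (C 0 - A 0) * ‖B - A‖ ^ 2
            = (inner ℝ (B - A) (C - A) : ℝ) * (B 0 - A 0) := by
          rw [IsogAux.normsq, IsogAux.inner2]
          simp only [IsogAux.sub_apply]
          linear_combination (-(B 1 - A 1)) * h0
        have hcomp1 : (C 1 - A 1) * ‖B - A‖ ^ 2
            = (inner ℝ (B - A) (C - A) : ℝ) * (B 1 - A 1) := by
          rw [IsogAux.normsq, IsogAux.inner2]
          simp only [IsogAux.sub_apply]
          linear_combination (B 0 - A 0) * h0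
        ext i
        fin_cases i
        · show C 0 = _ * (B 0 - A 0) + A 0
          rw [div_mul_eq_mul_div, eq_comm, div_add' _ _ _ hu2, div_eq_iff hu2]
          linear_combination hcomp0.symm
        · show C 1 = _ * (B 1 - A 1) + A 1
          rw [div_mul_eq_mul_div, eq_comm, div_add' _ _ _ hu2, div_eq_iff hu2]
          linear_combination hcomp1.symm
  have hBA0 : B - A ≠ 0 := (IsogAux.ne_zero_of_crs hne).1
  have hCA0 : C - A ≠ 0 := (IsogAux.ne_zero_of_crs hne).2
  -- cross products with K
  have hucv : IsogAux.crs (K - A) (C - A) = β * IsogAux.crs (B - A) (C - A) := by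
    simp only [IsogAux.crs, IsogAux.sub_apply]
    linear_combination (C 1 - A 1) * hkc 0 - (C 0 - A 0) * hkc 1
  have huk : IsogAux.crs (B - A) (K - A) = γ * IsogAux.crs (B - A) (C - A) := by
    simp only [IsogAux.crs, IsogAux.sub_apply]
    linear_combination (-(B 1 - A 1)) * hkc 0 + (B 0 - A 0) * hkc 1
  have hvk : IsogAux.crs ((C-A)-(B-A)) ((K-A)-(B-A)) = α * IsogAux.crs (B - A) (C - A) := by
    have hα' : α = 1 - β - γ := by linarith
    simp only [IsogAux.crs, IsogAux.sub_apply]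
    rw [hα']
    linear_combination ((C 0 - A 0) - (B 0 - A 0)) * hkc 1 - ((C 1 - A 1) - (B 1 - A 1)) * hkc 0
  -- nondegeneracies for K
  have hKA0 : K - A ≠ 0 := by
    intro h
    rw [h, IsogAux.crs_zero_left] at hucv
    exact hne ((mul_eq_zero.mp hucv.symm).resolve_left hβ.ne')
  have eKB : (K-A)-(B-A) = K - B := by abel
  have eCB : (C-A)-(B-A) = C - B := by abel
  have hKB0 : K - B ≠ 0 := by
    intro h
    rw [eKB, h, IsogAux.crs_zero_right] at hvk
    exact hne ((mul_eq_zero.mp hvk.symm).resolve_left hα.ne')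
  have hKC0 : K - C ≠ 0 := by
    intro h
    have : K - A = C - A := by
      have : K = C := by
        have := sub_eq_zero.mp h; exact this
      rw [this]
    rw [this, IsogAux.crs_self] at hucv
    exact hne ((mul_eq_zero.mp hucv.symm).resolve_left hβ.ne')
  have hvkne : IsogAux.crs ((C-A)-(B-A)) ((K-A)-(B-A)) ≠ 0 := by
    rw [hvk]
    exact fun hz => hne ((mul_eq_zero.mp hz).resolve_left hα.ne')
  have hCB0 : C - B ≠ 0 := by
    rw [← eCB]
    exact (IsogAux.ne_zero_of_crs hvkne).1
  have hAB0 : A - B ≠ 0 := fun h => hBA0 (by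
    have : A = B := sub_eq_zero.mp h
    rw [this, sub_self])
  have hBC0 : B - C ≠ 0 := fun h => hCB0 (by
    have : B = C := sub_eq_zero.mp h
    rw [this, sub_self])
  -- angle conditions to ratio form
  have c1 : (inner ℝ (K₁-A) (B-A) : ℝ)/(‖K₁-A‖*‖B-A‖)
      = (inner ℝ (K-A) (C-A) : ℝ)/(‖K-A‖*‖C-A‖) := by
    have h := congrArg Real.cos a1
    unfold EuclideanGeometry.angle at h
    rw [InnerProductGeometry.cos_angle, InnerProductGeometry.cos_angle] at h
    simpa [vsub_eq_sub] using h
  have c2 : (inner ℝ (K₁-B) (C-B) : ℝ)/(‖K₁-B‖*‖C-B‖)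
      = (inner ℝ (K-B) (A-B) : ℝ)/(‖K-B‖*‖A-B‖) := by
    have h := congrArg Real.cos a2
    unfold EuclideanGeometry.angle at h
    rw [InnerProductGeometry.cos_angle, InnerProductGeometry.cos_angle] at h
    simpa [vsub_eq_sub] using h
  have c3 : (inner ℝ (K₁-C) (A-C) : ℝ)/(‖K₁-C‖*‖A-C‖)
      = (inner ℝ (K-C) (B-C) : ℝ)/(‖K-C‖*‖B-C‖) := by
    have h := congrArg Real.cos a3
    unfold EuclideanGeometry.angle at h
    rw [InnerProductGeometry.cos_angle, InnerProductGeometry.cos_angle] at h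
    simpa [vsub_eq_sub] using h
  have hA' := IsogAux.ratio c1 hKA0 hCA0
  have hB' := IsogAux.ratio c2 hKB0 hAB0
  have hC' := IsogAux.ratio c3 hKC0 hBC0
  -- convert to the core form
  have hAc : (inner ℝ (K₁-A) (B-A) : ℝ) * (‖K-A‖*‖C-A‖)
      = (inner ℝ (K-A) (C-A) : ℝ) * (‖K₁-A‖*‖B-A‖) := hA'
  have hBc : (inner ℝ ((K₁-A)-(B-A)) ((C-A)-(B-A)) : ℝ) * (‖(K-A)-(B-A)‖*‖B-A‖)
      = (inner ℝ ((K-A)-(B-A)) (-(B-A)) : ℝ) * (‖(K₁-A)-(B-A)‖*‖(C-A)-(B-A)‖) := by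
    have e1 : (K₁-A)-(B-A) = K₁ - B := by abel
    have e4 : -(B-A) = A - B := by abel
    rw [e1, eCB, eKB, e4, norm_sub_rev B A]
    exact hB'
  have hCc : (inner ℝ ((K₁-A)-(C-A)) (-(C-A)) : ℝ) * (‖(K-A)-(C-A)‖*‖(B-A)-(C-A)‖)
      = (inner ℝ ((K-A)-(C-A)) ((B-A)-(C-A)) : ℝ) * (‖(K₁-A)-(C-A)‖*‖C-A‖) := by
    have e1 : (K₁-A)-(C-A) = K₁ - C := by abel
    have e2 : (B-A)-(C-A) = B - C := by abel
    have e3 : (K-A)-(C-A) = K - C := by abel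
    have e4 : -(C-A) = A - C := by abel
    rw [e1, e2, e3, e4, norm_sub_rev C A]
    exact hC'
  -- sign hypotheses
  have h1' : 0 < IsogAux.crs (K-A) (C-A) * IsogAux.crs (B-A) (C-A) := by
    have : IsogAux.crs (K-A) (C-A) * IsogAux.crs (B-A) (C-A)
        = β * (IsogAux.crs (B-A) (C-A))^2 := by rw [hucv]; ring
    rw [this]
    exact mul_pos hβ (pow_two_pos_of_ne_zero hne)
  have h2' : 0 < IsogAux.crs (B-A) (K-A) * IsogAux.crs (B-A) (C-A) := by
    have : IsogAux.crs (B-A) (K-A) * IsogAux.crs (B-A) (C-A)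
        = γ * (IsogAux.crs (B-A) (C-A))^2 := by rw [huk]; ring
    rw [this]
    exact mul_pos hγ (pow_two_pos_of_ne_zero hne)
  have h3' : 0 < IsogAux.crs ((C-A)-(B-A)) ((K-A)-(B-A)) * IsogAux.crs (B-A) (C-A) := by
    have : IsogAux.crs ((C-A)-(B-A)) ((K-A)-(B-A)) * IsogAux.crs (B-A) (C-A)
        = α * (IsogAux.crs (B-A) (C-A))^2 := by rw [hvk]; ring
    rw [this]
    exact mul_pos hα (pow_two_pos_of_ne_zero hne)
  have G := IsogAux.core' (u := B-A) (v := C-A) (k := K-A) (w := K₁-A)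
    hne h1' h2' h3' hAc hBc hCc
  -- feet of perpendiculars
  obtain ⟨r, hr⟩ : ∃ r : ℝ, r • (A -ᵥ C) = E -ᵥ C := by
    have h2 : (E -ᵥ C) +ᵥ C ∈ line[ℝ, C, A] := by simpa using hEmem
    exact vadd_left_mem_affineSpan_pair.mp h2
  set σ : ℝ := 1 - r with hσdef
  have hEc : ∀ i : Fin 2, E i - A i = σ * (C i - A i) := by
    intro i
    have h := congrArg (fun x : EuclideanSpace ℝ (Fin 2) => x i) hr
    simp only [vsub_eq_sub, IsogAux.smul_apply, IsogAux.sub_apply] at h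
    rw [hσdef]
    linear_combination (-1 : ℝ) * h
  obtain ⟨τ, hτ⟩ : ∃ t : ℝ, t • (B -ᵥ A) = F -ᵥ A := by
    have h2 : (F -ᵥ A) +ᵥ A ∈ line[ℝ, A, B] := by simpa using hFmem
    exact vadd_left_mem_affineSpan_pair.mp h2
  have hFc : ∀ i : Fin 2, F i - A i = τ * (B i - A i) := by
    intro i
    have h := congrArg (fun x : EuclideanSpace ℝ (Fin 2) => x i) hτ
    simp only [vsub_eq_sub, IsogAux.smul_apply, IsogAux.sub_apply] at h
    linear_combination (-1 : ℝ) * h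
  -- perpendicularity of feet
  have hσv : (inner ℝ (K₁-A) (C-A) : ℝ) = σ * ‖C-A‖^2 := by
    have hp : (inner ℝ (K₁ - E) (A - C) : ℝ) = 0 := hEperp
    rw [IsogAux.inner2] at hp
    rw [IsogAux.inner2, IsogAux.normsq]
    simp only [IsogAux.sub_apply] at hp ⊢
    linear_combination (-1 : ℝ) * hp + (C 0 - A 0) * hEc 0 + (C 1 - A 1) * hEc 1
  have hτu : (inner ℝ (K₁-A) (B-A) : ℝ) = τ * ‖B-A‖^2 := by
    have hp : (inner ℝ (K₁ - F) (B - A) : ℝ) = 0 := hFperp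
    rw [IsogAux.inner2] at hp
    rw [IsogAux.inner2, IsogAux.normsq]
    simp only [IsogAux.sub_apply] at hp ⊢
    linear_combination hp + (B 0 - A 0) * hFc 0 + (B 1 - A 1) * hFc 1
  -- combine everything
  have hid := IsogAux.idJ (B-A) (C-A) (K-A) (K₁-A)
  rw [G, sub_self, mul_zero] at hid
  rw [hτu, hσv] at hid
  have hu2v2 : (‖B-A‖^2 * ‖C-A‖^2 : ℝ) ≠ 0 :=
    mul_ne_zero (pow_ne_zero 2 (norm_ne_zero_iff.mpr hBA0))
      (pow_ne_zero 2 (norm_ne_zero_iff.mpr hCA0))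
  have hfin : τ * (inner ℝ (K-A) (B-A) : ℝ) - σ * (inner ℝ (K-A) (C-A) : ℝ) = 0 := by
    apply mul_left_cancel₀ hu2v2
    rw [mul_zero]
    linear_combination hid
  rw [IsogAux.inner2, IsogAux.inner2] at hfin
  rw [IsogAux.inner2]
  simp only [IsogAux.sub_apply] at hfin ⊢
  linear_combination hfin + (K 0 - A 0) * hFc 0 + (K 1 - A 1) * hFc 1
    - (K 0 - A 0) * hEc 0 - (K 1 - A 1) * hEc 1
end

section
/- Let ABC be a triangle, K an interior point with isogonal conjugate K₁, and let DEF be the pedal triangle of K₁ with respect to ABC (D, E, F projections of K₁ onto BC, CA, AB), and TUV the antipedal triangle of K with respect to ABC. Then the triangles TUV and DEF are homothetic: VU ∥ EF, VT ∥ DF, and TU ∥ DE. -/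
open EuclideanGeometry Real

/-- Two vectors in the plane orthogonal to a common nonzero vector are parallel. -/
lemma perp2 {q0 q1 x0 x1 y0 y1 : ℝ} (hq : ¬(q0 = 0 ∧ q1 = 0))
    (hx : x0*q0 + x1*q1 = 0) (hy : y0*q0 + y1*q1 = 0)
    (hyne : ¬(y0 = 0 ∧ y1 = 0)) : ∃ c : ℝ, x0 = c*y0 ∧ x1 = c*y1 := by
  have hcross : x0*y1 - x1*y0 = 0 := by
    rcases not_and_or.mp hq with h | h
    · have h1 : (x0*y1 - x1*y0)*q0 = y1*(x0*q0 + x1*q1) - x1*(y0*q0 + y1*q1) := by ring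
      rw [hx, hy] at h1; simp at h1
      rcases h1 with h1 | h1
      · exact h1
      · exact absurd h1 h
    · have h1 : (x0*y1 - x1*y0)*q1 = -y0*(x0*q0 + x1*q1) + x0*(y0*q0 + y1*q1) := by ring
      rw [hx, hy] at h1; simp at h1
      rcases h1 with h1 | h1
      · exact h1
      · exact absurd h1 h
  rcases not_and_or.mp hyne with h | h
  · refine ⟨x0/y0, by field_simp, ?_⟩
    field_simp
    linarith [hcross]
  · refine ⟨x1/y1, ?_, by field_simp⟩
    field_simp
    linarith [hcross]


lemma cross_ne_pos {a0 a1 b0 b1 : ℝ} (h : a0*b1 - a1*b0 ≠ 0) : 0 < a0^2+a1^2 := by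
  rcases eq_or_lt_of_le (by positivity : (0:ℝ) ≤ a0^2+a1^2) with h' | h'
  · exfalso
    have ha0 : a0 = 0 := by nlinarith [sq_nonneg a0, sq_nonneg a1]
    have ha1 : a1 = 0 := by nlinarith [sq_nonneg a0, sq_nonneg a1]
    exact h (by rw [ha0, ha1]; ring)
  · exact h'

lemma cross_ne_pos' {a0 a1 b0 b1 : ℝ} (h : a0*b1 - a1*b0 ≠ 0) : 0 < b0^2+b1^2 := by
  have : b0*a1 - b1*a0 ≠ 0 := fun hc => h (by linarith [hc])
  exact cross_ne_pos this

lemma norm_pos_aux {n a0 a1 : ℝ} (hn : 0 ≤ n) (h2 : n^2 = a0^2+a1^2)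
    (hp : 0 < a0^2+a1^2) : 0 < n := by nlinarith

set_option maxHeartbeats 1600000 in
/-- Abstract core of the vertex lemma, over plain reals. -/
lemma vertexCore (W P Cw Cp Y c0 X duv nu nv np nw : ℝ)
    (hnu0 : 0 < nu) (hnv0 : 0 < nv) (hnp0 : 0 < np) (hnw0 : 0 < nw)
    (lag1 : np^2*nv^2 = P^2 + Cp^2) (lag2 : nw^2*nu^2 = W^2 + Cw^2)
    (hE : W*(np*nv) = P*(nw*nu))
    (hup : Y*c0 > 0) (hpv : Cp*c0 > 0) (hside : Cw*c0 ≥ 0)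
    (e1 : X*nu^2 = W*c0 - Cw*duv) (e2 : P*c0 - Cp*duv = Y*nv^2) :
    W*Cp = P*Cw ∧ X*c0 > 0 ∧ Cw*c0 > 0 := by
  have hc0ne : c0 ≠ 0 := by rintro h; rw [h] at hup; simp at hup
  have hCpne : Cp ≠ 0 := by rintro h; rw [h] at hpv; simp at hpv
  have hE2 : W^2*(np^2*nv^2) = P^2*(nw^2*nu^2) := by
    have h2 : (W*(np*nv))^2 = (P*(nw*nu))^2 := by rw [hE]
    linear_combination h2
  have hDS : (W*Cp - P*Cw) * (W*Cp + P*Cw) = 0 := by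
    linear_combination hE2 - W^2*lag1 + P^2*lag2
  have hWP : W*P ≥ 0 := by
    have h3 : W*P*(np*nv) = P^2*(nw*nu) := by linear_combination P*hE
    have h4 : 0 ≤ P^2*(nw*nu) := by positivity
    have hpos : 0 < np*nv := mul_pos hnp0 hnv0
    nlinarith [h3, h4, hpos]
  have hW0P0 : W = 0 ↔ P = 0 := by
    constructor
    · intro h
      have h6 : P*(nw*nu) = 0 := by rw [← hE, h]; ring
      rcases mul_eq_zero.mp h6 with h' | h'
      · exact h'
      · exfalso; exact absurd h' (ne_of_gt (mul_pos hnw0 hnu0))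
    · intro h
      have h6 : W*(np*nv) = 0 := by rw [hE, h]; ring
      rcases mul_eq_zero.mp h6 with h' | h'
      · exact h'
      · exfalso; exact absurd h' (ne_of_gt (mul_pos hnp0 hnv0))
  have hD : W*Cp = P*Cw := by
    by_contra hDne
    have hS : W*Cp + P*Cw = 0 := by
      rcases mul_eq_zero.mp hDS with h | h
      · exact absurd (by linarith : W*Cp = P*Cw) hDne
      · exact h
    have hh : W*(Cp*c0) + P*(Cw*c0) = 0 := by linear_combination c0*hS
    rcases lt_trichotomy W 0 with hWlt | hWeq | hWgt
    · have hPlt : P < 0 := by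
        rcases lt_trichotomy P 0 with h | h | h
        · exact h
        · exact absurd (hW0P0.mpr h) (by linarith)
        · exfalso; nlinarith [hWP, mul_neg_of_neg_of_pos hWlt h]
      nlinarith [hh, mul_neg_of_neg_of_pos hWlt hpv,
        mul_nonneg (neg_nonneg.mpr hPlt.le) hside]
    · exact hDne (by rw [hWeq, hW0P0.mp hWeq]; ring)
    · have hPgt : 0 < P := by
        rcases lt_trichotomy P 0 with h | h | h
        · exfalso; nlinarith [hWP, mul_neg_of_pos_of_neg hWgt h]
        · exact absurd (hW0P0.mpr h) (by linarith)
        · exact h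
      nlinarith [hh, mul_pos hWgt hpv, mul_nonneg hPgt.le hside]
  refine ⟨hD, ?_⟩
  have hCwpos : Cw * c0 > 0 := by
    rcases lt_or_eq_of_le hside with h | h
    · exact h
    · exfalso
      have hCw0 : Cw = 0 := by
        rcases mul_eq_zero.mp h.symm with h' | h'
        · exact h'
        · exact absurd h' hc0ne
      have hW0 : W = 0 := by
        have h5 : W*Cp = 0 := by rw [hD, hCw0]; ring
        rcases mul_eq_zero.mp h5 with h' | h'
        · exact h'
        · exact absurd h' hCpne
      have h7 : nw^2*nu^2 = 0 := by rw [lag2, hW0, hCw0]; ring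
      have h8 : 0 < nw^2*nu^2 := by positivity
      linarith
  refine ⟨?_, hCwpos⟩
  have hN1sq : (Cw*(np*nv))^2 = (Cp*(nw*nu))^2 := by
    linear_combination Cw^2*lag1 - Cp^2*lag2 - (Cw*P + Cp*W)*hD
  have hN1 : Cw*(np*nv) = Cp*(nw*nu) := by
    have hsum : (Cw*(np*nv) - Cp*(nw*nu)) * (Cw*(np*nv) + Cp*(nw*nu)) = 0 := by
      linear_combination hN1sq
    rcases mul_eq_zero.mp hsum with h | h
    · linarith
    · exfalso
      rcases lt_trichotomy c0 0 with hc | hc | hc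
      · have h1 : Cw < 0 := by
          rcases mul_pos_iff.mp hCwpos with h' | h'
          · linarith [h'.2]
          · exact h'.1
        have h2 : Cp < 0 := by
          rcases mul_pos_iff.mp hpv with h' | h'
          · linarith [h'.2]
          · exact h'.1
        linarith [h, mul_neg_of_neg_of_pos h1 (mul_pos hnp0 hnv0),
          mul_neg_of_neg_of_pos h2 (mul_pos hnw0 hnu0)]
      · exact hc0ne hc
      · have h1 : 0 < Cw := by
          rcases mul_pos_iff.mp hCwpos with h' | h'
          · exact h'.1
          · linarith [h'.2]
        have h2 : 0 < Cp := by
          rcases mul_pos_iff.mp hpv with h' | h'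
          · exact h'.1
          · linarith [h'.2]
        linarith [h, mul_pos h1 (mul_pos hnp0 hnv0),
          mul_pos h2 (mul_pos hnw0 hnu0)]
  have hXrel : X * (nu^2*(np*nv)) = Y * ((nw*nu)*nv^2) := by
    calc X * (nu^2*(np*nv)) = (X*nu^2)*(np*nv) := by ring
      _ = (W*(np*nv))*c0 - (Cw*(np*nv))*duv := by rw [e1]; ring
      _ = (P*(nw*nu))*c0 - (Cp*(nw*nu))*duv := by rw [hE, hN1]
      _ = (nw*nu)*(P*c0 - Cp*duv) := by ring
      _ = (nw*nu)*(Y*nv^2) := by rw [e2]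
      _ = Y * ((nw*nu)*nv^2) := by ring
  have hfac : 0 < nu^2*(np*nv) := by positivity
  have hfac2 : 0 < (nw*nu)*nv^2 := by positivity
  have h9 : (X*c0)*(nu^2*(np*nv)) = (Y*c0)*((nw*nu)*nv^2) := by
    linear_combination c0*hXrel
  have h10 : 0 < (Y*c0)*((nw*nu)*nv^2) := mul_pos hup hfac2
  have h11 : 0 < (X*c0)*(nu^2*(np*nv)) := by rw [h9]; exact h10
  by_contra hX0
  push_neg at hX0
  nlinarith [h11, mul_nonneg (neg_nonneg.mpr hX0) hfac.le]

set_option maxHeartbeats 1600000 in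
/-- Vertex lemma in coordinates. -/
lemma vertexLemma (u0 u1 v0 v1 p0 p1 w0 w1 nu nv np nw : ℝ)
    (hnu : 0 ≤ nu) (hnu2 : nu^2 = u0^2+u1^2)
    (hnv : 0 ≤ nv) (hnv2 : nv^2 = v0^2+v1^2)
    (hnp : 0 ≤ np) (hnp2 : np^2 = p0^2+p1^2)
    (hnw : 0 ≤ nw) (hnw2 : nw^2 = w0^2+w1^2)
    (hE : (w0*u0+w1*u1) * (np*nv) = (p0*v0+p1*v1) * (nw*nu))
    (hup : (u0*p1 - u1*p0) * (u0*v1 - u1*v0) > 0)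
    (hpv : (p0*v1 - p1*v0) * (u0*v1 - u1*v0) > 0)
    (hside : (u0*w1 - u1*w0) * (u0*v1 - u1*v0) ≥ 0) :
    (w0*u0+w1*u1) * (p0*v1-p1*v0) = (p0*v0+p1*v1) * (u0*w1-u1*w0) ∧
      (¬(w0=0 ∧ w1=0) →
        (w0*v1 - w1*v0) * (u0*v1-u1*v0) > 0 ∧ (u0*w1-u1*w0)*(u0*v1-u1*v0) > 0) := by
  have hc0ne : u0*v1 - u1*v0 ≠ 0 := by
    rintro h; rw [h] at hup; simp at hup
  have hCpne : p0*v1 - p1*v0 ≠ 0 := by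
    rintro h; rw [h] at hpv; simp at hpv
  have hnu0 : 0 < nu := norm_pos_aux hnu hnu2 (cross_ne_pos hc0ne)
  have hnv0 : 0 < nv := norm_pos_aux hnv hnv2 (cross_ne_pos' hCpne)
  have hnp0 : 0 < np := norm_pos_aux hnp hnp2 (cross_ne_pos hCpne)
  by_cases hw : w0 = 0 ∧ w1 = 0
  · exact ⟨by rw [hw.1, hw.2]; ring, fun h => absurd hw h⟩
  have hnw0 : 0 < nw := by
    apply norm_pos_aux hnw hnw2
    rcases not_and_or.mp hw with h | h
    · nlinarith [sq_nonneg w1, sq_pos_of_ne_zero h]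
    · nlinarith [sq_nonneg w0, sq_pos_of_ne_zero h]
  have lag1 : np^2*nv^2 = (p0*v0+p1*v1)^2 + (p0*v1-p1*v0)^2 := by
    rw [hnp2, hnv2]; ring
  have lag2 : nw^2*nu^2 = (w0*u0+w1*u1)^2 + (u0*w1-u1*w0)^2 := by
    rw [hnw2, hnu2]; ring
  have e1 : (w0*v1-w1*v0)*nu^2 = (w0*u0+w1*u1)*(u0*v1-u1*v0) - (u0*w1-u1*w0)*(u0*v0+u1*v1) := by
    rw [hnu2]; ring
  have e2 : (p0*v0+p1*v1)*(u0*v1-u1*v0) - (p0*v1-p1*v0)*(u0*v0+u1*v1) = (u0*p1-u1*p0)*nv^2 := by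
    rw [hnv2]; ring
  obtain ⟨h1, h2, h3⟩ := vertexCore (w0*u0+w1*u1) (p0*v0+p1*v1) (u0*w1-u1*w0)
    (p0*v1-p1*v0) (u0*p1-u1*p0) (u0*v1-u1*v0) (w0*v1-w1*v0) (u0*v0+u1*v1)
    nu nv np nw hnu0 hnv0 hnp0 hnw0 lag1 lag2 hE hup hpv hside e1 e2
  exact ⟨h1, fun _ => ⟨h2, h3⟩⟩

lemma inner2 (x y : EuclideanSpace ℝ (Fin 2)) : (inner ℝ x y : ℝ) = x 0 * y 0 + x 1 * y 1 := by
  simp [PiLp.inner_apply, RCLike.inner_apply, Fin.sum_univ_two]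
  ring

lemma sub_apply2 (x y : EuclideanSpace ℝ (Fin 2)) (i : Fin 2) : (x - y) i = x i - y i := rfl

lemma div_to_mul {a b c d : ℝ} (hb : 0 ≤ b) (hd : 0 < d) (h0 : b = 0 → a = 0)
    (h : a/b = c/d) : a*d = c*b := by
  rcases eq_or_lt_of_le hb with h1 | h1
  · rw [h0 h1.symm]; rw [← h1]; ring
  · rw [div_eq_div_iff (ne_of_gt h1) (ne_of_gt hd)] at h
    linarith

lemma angle_to_E {Z Q R P S : EuclideanSpace ℝ (Fin 2)} (h : ∠ Q Z R = ∠ P Z S)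
    (hpne : P - Z ≠ 0) (hsne : S - Z ≠ 0) :
    ((Q 0 - Z 0)*(R 0 - Z 0) + (Q 1 - Z 1)*(R 1 - Z 1)) * (‖P - Z‖*‖S - Z‖)
      = ((P 0 - Z 0)*(S 0 - Z 0) + (P 1 - Z 1)*(S 1 - Z 1)) * (‖Q - Z‖*‖R - Z‖) := by
  have hc : Real.cos (InnerProductGeometry.angle (Q - Z) (R - Z))
      = Real.cos (InnerProductGeometry.angle (P - Z) (S - Z)) := by
    rw [EuclideanGeometry.angle, EuclideanGeometry.angle] at h
    simp only [vsub_eq_sub] at h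
    rw [h]
  rw [InnerProductGeometry.cos_angle, InnerProductGeometry.cos_angle] at hc
  have hm := div_to_mul (by positivity) (by
      have := norm_pos_iff.mpr hpne
      have := norm_pos_iff.mpr hsne
      positivity)
    (fun hz => by
      rcases mul_eq_zero.mp hz with h' | h'
      · rw [norm_eq_zero.mp h', inner_zero_left]
      · rw [norm_eq_zero.mp h', inner_zero_right]) hc
  rw [inner2, inner2] at hm
  have e1 : (Q - Z) 0 = Q 0 - Z 0 := rfl
  have e2 : (Q - Z) 1 = Q 1 - Z 1 := rfl
  have e3 : (R - Z) 0 = R 0 - Z 0 := rfl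
  have e4 : (R - Z) 1 = R 1 - Z 1 := rfl
  have e5 : (P - Z) 0 = P 0 - Z 0 := rfl
  have e6 : (P - Z) 1 = P 1 - Z 1 := rfl
  have e7 : (S - Z) 0 = S 0 - Z 0 := rfl
  have e8 : (S - Z) 1 = S 1 - Z 1 := rfl
  rw [e1, e2, e3, e4, e5, e6, e7, e8] at hm
  exact hm

lemma spanPair {P X Y : EuclideanSpace ℝ (Fin 2)}
    (h : P ∈ affineSpan ℝ ({X, Y} : Set (EuclideanSpace ℝ (Fin 2)))) :
    ∃ t : ℝ, P - X = t • (Y - X) := by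
  have h2 : (P - X) +ᵥ X ∈ affineSpan ℝ ({X, Y} : Set (EuclideanSpace ℝ (Fin 2))) := by
    simpa [vadd_eq_add, sub_add_cancel] using h
  obtain ⟨r, hr⟩ := vadd_left_mem_affineSpan_pair.mp h2
  exact ⟨r, by simpa [vsub_eq_sub] using hr.symm⟩

lemma norm2 (x : EuclideanSpace ℝ (Fin 2)) : ‖x‖^2 = (x 0)^2 + (x 1)^2 := by
  rw [← real_inner_self_eq_norm_sq]
  rw [inner2]
  try ring

lemma norm2sub (x y : EuclideanSpace ℝ (Fin 2)) :
    ‖x - y‖^2 = (x 0 - y 0)^2 + (x 1 - y 1)^2 := by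
  rw [norm2]; rfl

set_option maxHeartbeats 4000000 in
theorem antipedal_pedal_homothetic (A B C K K₁ D E F T U V : EuclideanSpace ℝ (Fin 2))
    (hABC : AffineIndependent ℝ ![A, B, C])
    (hK : K ∈ interior (convexHull ℝ ({A, B, C} : Set (EuclideanSpace ℝ (Fin 2)))))
    (hK₁ : IsIsogonalConj A B C K K₁)
    (hD : IsFoot K₁ D B C) (hE : IsFoot K₁ E C A) (hF : IsFoot K₁ F A B)
    (hA : A ∈ affineSpan ℝ ({V, U} : Set (EuclideanSpace ℝ (Fin 2))))
    (hAperp : inner ℝ (A - K) (U - V) = (0 : ℝ))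
    (hB : B ∈ affineSpan ℝ ({T, V} : Set (EuclideanSpace ℝ (Fin 2))))
    (hBperp : inner ℝ (B - K) (V - T) = (0 : ℝ))
    (hCmem : C ∈ affineSpan ℝ ({T, U} : Set (EuclideanSpace ℝ (Fin 2))))
    (hCperp : inner ℝ (C - K) (U - T) = (0 : ℝ)) :
    (∃ c : ℝ, U - V = c • (F - E)) ∧ (∃ c : ℝ, T - V = c • (F - D)) ∧
      (∃ c : ℝ, U - T = c • (E - D)) := by
  obtain ⟨hIso1, hIso2, hIso3⟩ := hK₁
  -- barycentric coordinates of K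
  obtain ⟨α, β, γ, hα, hβ, hγ, hsum1, hKeq⟩ : ∃ α β γ : ℝ, 0 < α ∧ 0 < β ∧ 0 < γ ∧
      α + β + γ = 1 ∧ K = α • A + β • B + γ • C := by
    have htop : affineSpan ℝ (Set.range ![A, B, C]) = ⊤ := by
      rw [hABC.affineSpan_eq_top_iff_card_eq_finrank_add_one]
      simp [finrank_euclideanSpace_fin]
    let b : AffineBasis (Fin 3) ℝ (EuclideanSpace ℝ (Fin 2)) := ⟨![A, B, C], hABC, htop⟩
    have hK' : K ∈ interior (convexHull ℝ (Set.range b)) := by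
      show K ∈ interior (convexHull ℝ (Set.range ![A, B, C]))
      have hrange : Set.range ![A, B, C] = ({A, B, C} : Set (EuclideanSpace ℝ (Fin 2))) := by
        simp only [Matrix.range_cons, Matrix.range_empty, Set.union_empty]
        ext x; simp; tauto
      rw [hrange]; exact hK
    rw [b.interior_convexHull] at hK'
    refine ⟨b.coord 0 K, b.coord 1 K, b.coord 2 K, hK' 0, hK' 1, hK' 2, ?_, ?_⟩
    · have h := b.sum_coord_apply_eq_one K
      rw [Fin.sum_univ_three] at h
      exact h
    · have hcomb := b.affineCombination_coord_eq_self K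
      have hsum : ∑ i, b.coord i K = 1 := b.sum_coord_apply_eq_one K
      rw [Finset.univ.affineCombination_eq_linear_combination _ _ hsum] at hcomb
      have hb0 : b 0 = A := rfl
      have hb1 : b 1 = B := rfl
      have hb2 : b 2 = C := rfl
      rw [Fin.sum_univ_three, hb0, hb1, hb2] at hcomb
      exact hcomb.symm
  have hK0c : K 0 = α * A 0 + β * B 0 + γ * C 0 := by rw [hKeq]; rfl
  have hK1c : K 1 = α * A 1 + β * B 1 + γ * C 1 := by rw [hKeq]; rfl
  have hαv : α = 1 - β - γ := by linarith
  -- the triangle is nondegenerate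
  have hs : ((B 0 - A 0) * (C 1 - A 1) - (B 1 - A 1) * (C 0 - A 0)) ≠ 0 := by
    intro hs0
    have hBA : B ≠ A := by
      intro h
      have h2 : (1 : Fin 3) = 0 := hABC.injective (by simp [h])
      exact absurd h2 (by decide)
    set n : EuclideanSpace ℝ (Fin 2) :=
      (WithLp.equiv 2 (Fin 2 → ℝ)).symm ![-(B 1 - A 1), B 0 - A 0] with hn
    have hn0 : n 0 = -(B 1 - A 1) := rfl
    have hn1 : n 1 = B 0 - A 0 := rfl
    have hnne : n ≠ 0 := by
      intro h
      apply hBA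
      have e0 : n 0 = 0 := by rw [h]; rfl
      have e1 : n 1 = 0 := by rw [h]; rfl
      rw [hn0] at e0; rw [hn1] at e1
      ext i; fin_cases i
      · show B 0 = A 0; linarith
      · show B 1 = A 1; linarith
    have hplane : ∀ P ∈ convexHull ℝ ({A, B, C} : Set (EuclideanSpace ℝ (Fin 2))),
        (inner ℝ n P : ℝ) = inner ℝ n A := by
      intro P hP
      have hconv : Convex ℝ {P : EuclideanSpace ℝ (Fin 2) | (inner ℝ n P : ℝ) = inner ℝ n A} :=
        convex_hyperplane (IsLinearMap.mk (fun x y => inner_add_right n x y)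
          (fun c x => real_inner_smul_right n x c)) _
      have hsub : ({A, B, C} : Set (EuclideanSpace ℝ (Fin 2))) ⊆
          {P : EuclideanSpace ℝ (Fin 2) | (inner ℝ n P : ℝ) = inner ℝ n A} := by
        intro P hP
        simp only [Set.mem_insert_iff, Set.mem_singleton_iff] at hP
        have : (inner ℝ n P : ℝ) = inner ℝ n A := by
          rcases hP with h | h | h
          · rw [h]
          · rw [h, inner2, inner2, hn0, hn1]; ring
          · rw [h, inner2, inner2, hn0, hn1]; linarith [hs0]
        exact this
      exact convexHull_min hsub hconv hP
    obtain ⟨ε, hε, hball⟩ := Metric.isOpen_iff.mp isOpen_interior K hK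
    have hnpos : 0 < ‖n‖ := norm_pos_iff.mpr hnne
    have hc : 0 < ε / (2*‖n‖) := by positivity
    set Pt := K + (ε / (2*‖n‖)) • n with hPtdef
    have hPt : Pt ∈ Metric.ball K ε := by
      rw [Metric.mem_ball, dist_eq_norm]
      have e2 : Pt - K = (ε / (2*‖n‖)) • n := by rw [hPtdef]; abel
      rw [e2, norm_smul, Real.norm_eq_abs, abs_of_pos hc, div_mul_eq_mul_div, mul_comm,
        div_lt_iff₀ (by positivity)]
      nlinarith [hnpos, hε]
    have h1 := hplane Pt (interior_subset (hball hPt))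
    have h2 := hplane K (interior_subset hK)
    have h3 : (inner ℝ n Pt : ℝ) = inner ℝ n K + (ε / (2*‖n‖)) * (inner ℝ n n : ℝ) := by
      rw [hPtdef, inner_add_right, real_inner_smul_right]
    have h4 : (inner ℝ n n : ℝ) = ‖n‖^2 := real_inner_self_eq_norm_sq n
    nlinarith [h1, h2, h3, h4, mul_pos hc (mul_pos hnpos hnpos)]
  have hs2 : 0 < ((B 0 - A 0) * (C 1 - A 1) - (B 1 - A 1) * (C 0 - A 0))^2 :=
    pow_two_pos_of_ne_zero hs
  -- feet of perpendiculars
  obtain ⟨d, hdv⟩ := spanPair hD.1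
  have hd0 : D 0 - B 0 = d * (C 0 - B 0) := congrArg (fun z => z 0) hdv
  have hd1 : D 1 - B 1 = d * (C 1 - B 1) := congrArg (fun z => z 1) hdv
  have hdp : (K₁ 0 - D 0) * (C 0 - B 0) + (K₁ 1 - D 1) * (C 1 - B 1) = 0 := by
    have h := hD.2; rw [inner2] at h; exact h
  have hdeqB : d * ((C 0 - B 0)^2 + (C 1 - B 1)^2)
      = (K₁ 0 - B 0) * (C 0 - B 0) + (K₁ 1 - B 1) * (C 1 - B 1) := by
    linear_combination (-1 : ℝ) * hdp - (C 0 - B 0) * hd0 - (C 1 - B 1) * hd1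
  obtain ⟨f, hfv⟩ := spanPair hF.1
  have hf0 : F 0 - A 0 = f * (B 0 - A 0) := congrArg (fun z => z 0) hfv
  have hf1 : F 1 - A 1 = f * (B 1 - A 1) := congrArg (fun z => z 1) hfv
  have hfp : (K₁ 0 - F 0) * (B 0 - A 0) + (K₁ 1 - F 1) * (B 1 - A 1) = 0 := by
    have h := hF.2; rw [inner2] at h; exact h
  have hfeqA : f * ((B 0 - A 0)^2 + (B 1 - A 1)^2)
      = (K₁ 0 - A 0) * (B 0 - A 0) + (K₁ 1 - A 1) * (B 1 - A 1) := by
    linear_combination (-1 : ℝ) * hfp - (B 0 - A 0) * hf0 - (B 1 - A 1) * hf1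
  obtain ⟨eE, hev⟩ := spanPair hE.1
  have he0 : E 0 - C 0 = eE * (A 0 - C 0) := congrArg (fun z => z 0) hev
  have he1 : E 1 - C 1 = eE * (A 1 - C 1) := congrArg (fun z => z 1) hev
  have hep : (K₁ 0 - E 0) * (A 0 - C 0) + (K₁ 1 - E 1) * (A 1 - C 1) = 0 := by
    have h := hE.2; rw [inner2] at h; exact h
  have heeqC : eE * ((A 0 - C 0)^2 + (A 1 - C 1)^2)
      = (K₁ 0 - C 0) * (A 0 - C 0) + (K₁ 1 - C 1) * (A 1 - C 1) := by
    linear_combination (-1 : ℝ) * hep - (A 0 - C 0) * he0 - (A 1 - C 1) * he1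
  have heeqA2 : (1 - eE) * ((C 0 - A 0)^2 + (C 1 - A 1)^2)
      = (K₁ 0 - A 0) * (C 0 - A 0) + (K₁ 1 - A 1) * (C 1 - A 1) := by
    linear_combination (-1 : ℝ) * heeqC
  have hfeqB2 : (1 - f) * ((A 0 - B 0)^2 + (A 1 - B 1)^2)
      = (K₁ 0 - B 0) * (A 0 - B 0) + (K₁ 1 - B 1) * (A 1 - B 1) := by
    linear_combination (-1 : ℝ) * hfeqA
  have hdeqC2 : (1 - d) * ((B 0 - C 0)^2 + (B 1 - C 1)^2)
      = (K₁ 0 - C 0) * (B 0 - C 0) + (K₁ 1 - C 1) * (B 1 - C 1) := by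
    linear_combination (-1 : ℝ) * hdeqB

  -- vertex A
  have hcuA : (B 0 - A 0) * (K 1 - A 1) - (B 1 - A 1) * (K 0 - A 0) = γ * ((B 0 - A 0) * (C 1 - A 1) - (B 1 - A 1) * (C 0 - A 0)) := by
    rw [hK0c, hK1c, hαv]; ring
  have hcpA : (K 0 - A 0) * (C 1 - A 1) - (K 1 - A 1) * (C 0 - A 0) = β * ((B 0 - A 0) * (C 1 - A 1) - (B 1 - A 1) * (C 0 - A 0)) := by
    rw [hK0c, hK1c, hαv]; ring
  have hpneA : K - A ≠ 0 := by
    intro h0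
    have h1 : K 0 - A 0 = 0 := by rw [← sub_apply2, h0]; rfl
    have h2 : K 1 - A 1 = 0 := by rw [← sub_apply2, h0]; rfl
    rw [h1, h2] at hcuA
    have h3 : γ * ((B 0 - A 0) * (C 1 - A 1) - (B 1 - A 1) * (C 0 - A 0)) = 0 := by linear_combination (-1 : ℝ) * hcuA
    exact (mul_ne_zero (ne_of_gt hγ) hs) h3
  have hvneA : C - A ≠ 0 := by
    intro h0
    have h1 : C 0 - A 0 = 0 := by rw [← sub_apply2, h0]; rfl
    have h2 : C 1 - A 1 = 0 := by rw [← sub_apply2, h0]; rfl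
    apply hs
    have h1' : C 0 = A 0 := by linarith
    have h2' : C 1 = A 1 := by linarith
    rw [h1', h2']; ring
  have hEA := angle_to_E hIso1 hpneA hvneA
  have hupA : ((B 0 - A 0) * (K 1 - A 1) - (B 1 - A 1) * (K 0 - A 0)) * ((B 0 - A 0) * (C 1 - A 1) - (B 1 - A 1) * (C 0 - A 0)) > 0 := by
    have e0 : ((B 0 - A 0) * (C 1 - A 1) - (B 1 - A 1) * (C 0 - A 0)) = ((B 0 - A 0) * (C 1 - A 1) - (B 1 - A 1) * (C 0 - A 0)) := by ring
    rw [hcuA, e0]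
    have e1 : γ * ((B 0 - A 0) * (C 1 - A 1) - (B 1 - A 1) * (C 0 - A 0)) * ((B 0 - A 0) * (C 1 - A 1) - (B 1 - A 1) * (C 0 - A 0)) = γ * ((B 0 - A 0) * (C 1 - A 1) - (B 1 - A 1) * (C 0 - A 0))^2 := by ring
    rw [e1]
    exact mul_pos hγ hs2
  have hpvA : ((K 0 - A 0) * (C 1 - A 1) - (K 1 - A 1) * (C 0 - A 0)) * ((B 0 - A 0) * (C 1 - A 1) - (B 1 - A 1) * (C 0 - A 0)) > 0 := by
    have e0 : ((B 0 - A 0) * (C 1 - A 1) - (B 1 - A 1) * (C 0 - A 0)) = ((B 0 - A 0) * (C 1 - A 1) - (B 1 - A 1) * (C 0 - A 0)) := by ring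
    rw [hcpA, e0]
    have e1 : β * ((B 0 - A 0) * (C 1 - A 1) - (B 1 - A 1) * (C 0 - A 0)) * ((B 0 - A 0) * (C 1 - A 1) - (B 1 - A 1) * (C 0 - A 0)) = β * ((B 0 - A 0) * (C 1 - A 1) - (B 1 - A 1) * (C 0 - A 0))^2 := by ring
    rw [e1]
    exact mul_pos hβ hs2
  have dichA := fun hsd => vertexLemma (B 0 - A 0) (B 1 - A 1) (C 0 - A 0) (C 1 - A 1) (K 0 - A 0) (K 1 - A 1) (K₁ 0 - A 0) (K₁ 1 - A 1)
    ‖B - A‖ ‖C - A‖ ‖K - A‖ ‖K₁ - A‖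
    (norm_nonneg _) (norm2sub B A) (norm_nonneg _) (norm2sub C A)
    (norm_nonneg _) (norm2sub K A) (norm_nonneg _) (norm2sub K₁ A)
    hEA hupA hpvA hsd

  -- vertex B
  have hcuB : (C 0 - B 0) * (K 1 - B 1) - (C 1 - B 1) * (K 0 - B 0) = α * ((B 0 - A 0) * (C 1 - A 1) - (B 1 - A 1) * (C 0 - A 0)) := by
    rw [hK0c, hK1c, hαv]; ring
  have hcpB : (K 0 - B 0) * (A 1 - B 1) - (K 1 - B 1) * (A 0 - B 0) = γ * ((B 0 - A 0) * (C 1 - A 1) - (B 1 - A 1) * (C 0 - A 0)) := by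
    rw [hK0c, hK1c, hαv]; ring
  have hpneB : K - B ≠ 0 := by
    intro h0
    have h1 : K 0 - B 0 = 0 := by rw [← sub_apply2, h0]; rfl
    have h2 : K 1 - B 1 = 0 := by rw [← sub_apply2, h0]; rfl
    rw [h1, h2] at hcuB
    have h3 : α * ((B 0 - A 0) * (C 1 - A 1) - (B 1 - A 1) * (C 0 - A 0)) = 0 := by linear_combination (-1 : ℝ) * hcuB
    exact (mul_ne_zero (ne_of_gt hα) hs) h3
  have hvneB : A - B ≠ 0 := by
    intro h0
    have h1 : A 0 - B 0 = 0 := by rw [← sub_apply2, h0]; rfl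
    have h2 : A 1 - B 1 = 0 := by rw [← sub_apply2, h0]; rfl
    apply hs
    have h1' : A 0 = B 0 := by linarith
    have h2' : A 1 = B 1 := by linarith
    rw [h1', h2']; ring
  have hEB := angle_to_E hIso2 hpneB hvneB
  have hupB : ((C 0 - B 0) * (K 1 - B 1) - (C 1 - B 1) * (K 0 - B 0)) * ((C 0 - B 0) * (A 1 - B 1) - (C 1 - B 1) * (A 0 - B 0)) > 0 := by
    have e0 : ((C 0 - B 0) * (A 1 - B 1) - (C 1 - B 1) * (A 0 - B 0)) = ((B 0 - A 0) * (C 1 - A 1) - (B 1 - A 1) * (C 0 - A 0)) := by ring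
    rw [hcuB, e0]
    have e1 : α * ((B 0 - A 0) * (C 1 - A 1) - (B 1 - A 1) * (C 0 - A 0)) * ((B 0 - A 0) * (C 1 - A 1) - (B 1 - A 1) * (C 0 - A 0)) = α * ((B 0 - A 0) * (C 1 - A 1) - (B 1 - A 1) * (C 0 - A 0))^2 := by ring
    rw [e1]
    exact mul_pos hα hs2
  have hpvB : ((K 0 - B 0) * (A 1 - B 1) - (K 1 - B 1) * (A 0 - B 0)) * ((C 0 - B 0) * (A 1 - B 1) - (C 1 - B 1) * (A 0 - B 0)) > 0 := by
    have e0 : ((C 0 - B 0) * (A 1 - B 1) - (C 1 - B 1) * (A 0 - B 0)) = ((B 0 - A 0) * (C 1 - A 1) - (B 1 - A 1) * (C 0 - A 0)) := by ring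
    rw [hcpB, e0]
    have e1 : γ * ((B 0 - A 0) * (C 1 - A 1) - (B 1 - A 1) * (C 0 - A 0)) * ((B 0 - A 0) * (C 1 - A 1) - (B 1 - A 1) * (C 0 - A 0)) = γ * ((B 0 - A 0) * (C 1 - A 1) - (B 1 - A 1) * (C 0 - A 0))^2 := by ring
    rw [e1]
    exact mul_pos hγ hs2
  have dichB := fun hsd => vertexLemma (C 0 - B 0) (C 1 - B 1) (A 0 - B 0) (A 1 - B 1) (K 0 - B 0) (K 1 - B 1) (K₁ 0 - B 0) (K₁ 1 - B 1)
    ‖C - B‖ ‖A - B‖ ‖K - B‖ ‖K₁ - B‖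
    (norm_nonneg _) (norm2sub C B) (norm_nonneg _) (norm2sub A B)
    (norm_nonneg _) (norm2sub K B) (norm_nonneg _) (norm2sub K₁ B)
    hEB hupB hpvB hsd

  -- vertex C
  have hcuC : (A 0 - C 0) * (K 1 - C 1) - (A 1 - C 1) * (K 0 - C 0) = β * ((B 0 - A 0) * (C 1 - A 1) - (B 1 - A 1) * (C 0 - A 0)) := by
    rw [hK0c, hK1c, hαv]; ring
  have hcpC : (K 0 - C 0) * (B 1 - C 1) - (K 1 - C 1) * (B 0 - C 0) = α * ((B 0 - A 0) * (C 1 - A 1) - (B 1 - A 1) * (C 0 - A 0)) := by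
    rw [hK0c, hK1c, hαv]; ring
  have hpneC : K - C ≠ 0 := by
    intro h0
    have h1 : K 0 - C 0 = 0 := by rw [← sub_apply2, h0]; rfl
    have h2 : K 1 - C 1 = 0 := by rw [← sub_apply2, h0]; rfl
    rw [h1, h2] at hcuC
    have h3 : β * ((B 0 - A 0) * (C 1 - A 1) - (B 1 - A 1) * (C 0 - A 0)) = 0 := by linear_combination (-1 : ℝ) * hcuC
    exact (mul_ne_zero (ne_of_gt hβ) hs) h3
  have hvneC : B - C ≠ 0 := by
    intro h0
    have h1 : B 0 - C 0 = 0 := by rw [← sub_apply2, h0]; rfl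
    have h2 : B 1 - C 1 = 0 := by rw [← sub_apply2, h0]; rfl
    apply hs
    have h1' : B 0 = C 0 := by linarith
    have h2' : B 1 = C 1 := by linarith
    rw [h1', h2']; ring
  have hEC := angle_to_E hIso3 hpneC hvneC
  have hupC : ((A 0 - C 0) * (K 1 - C 1) - (A 1 - C 1) * (K 0 - C 0)) * ((A 0 - C 0) * (B 1 - C 1) - (A 1 - C 1) * (B 0 - C 0)) > 0 := by
    have e0 : ((A 0 - C 0) * (B 1 - C 1) - (A 1 - C 1) * (B 0 - C 0)) = ((B 0 - A 0) * (C 1 - A 1) - (B 1 - A 1) * (C 0 - A 0)) := by ring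
    rw [hcuC, e0]
    have e1 : β * ((B 0 - A 0) * (C 1 - A 1) - (B 1 - A 1) * (C 0 - A 0)) * ((B 0 - A 0) * (C 1 - A 1) - (B 1 - A 1) * (C 0 - A 0)) = β * ((B 0 - A 0) * (C 1 - A 1) - (B 1 - A 1) * (C 0 - A 0))^2 := by ring
    rw [e1]
    exact mul_pos hβ hs2
  have hpvC : ((K 0 - C 0) * (B 1 - C 1) - (K 1 - C 1) * (B 0 - C 0)) * ((A 0 - C 0) * (B 1 - C 1) - (A 1 - C 1) * (B 0 - C 0)) > 0 := by
    have e0 : ((A 0 - C 0) * (B 1 - C 1) - (A 1 - C 1) * (B 0 - C 0)) = ((B 0 - A 0) * (C 1 - A 1) - (B 1 - A 1) * (C 0 - A 0)) := by ring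
    rw [hcpC, e0]
    have e1 : α * ((B 0 - A 0) * (C 1 - A 1) - (B 1 - A 1) * (C 0 - A 0)) * ((B 0 - A 0) * (C 1 - A 1) - (B 1 - A 1) * (C 0 - A 0)) = α * ((B 0 - A 0) * (C 1 - A 1) - (B 1 - A 1) * (C 0 - A 0))^2 := by ring
    rw [e1]
    exact mul_pos hα hs2
  have dichC := fun hsd => vertexLemma (A 0 - C 0) (A 1 - C 1) (B 0 - C 0) (B 1 - C 1) (K 0 - C 0) (K 1 - C 1) (K₁ 0 - C 0) (K₁ 1 - C 1)
    ‖A - C‖ ‖B - C‖ ‖K - C‖ ‖K₁ - C‖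
    (norm_nonneg _) (norm2sub A C) (norm_nonneg _) (norm2sub B C)
    (norm_nonneg _) (norm2sub K C) (norm_nonneg _) (norm2sub K₁ C)
    hEC hupC hpvC hsd

  have badBofA : ((B 0 - A 0) * (K₁ 1 - A 1) - (B 1 - A 1) * (K₁ 0 - A 0)) * ((B 0 - A 0) * (C 1 - A 1) - (B 1 - A 1) * (C 0 - A 0)) < 0 → ((C 0 - B 0) * (K₁ 1 - B 1) - (C 1 - B 1) * (K₁ 0 - B 0)) * ((B 0 - A 0) * (C 1 - A 1) - (B 1 - A 1) * (C 0 - A 0)) < 0 := by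
    intro hbad
    by_contra hge
    push_neg at hge
    have hsd : ((C 0 - B 0) * (K₁ 1 - B 1) - (C 1 - B 1) * (K₁ 0 - B 0)) * ((C 0 - B 0) * (A 1 - B 1) - (C 1 - B 1) * (A 0 - B 0)) ≥ 0 := by
      have e0 : ((C 0 - B 0) * (A 1 - B 1) - (C 1 - B 1) * (A 0 - B 0)) = ((B 0 - A 0) * (C 1 - A 1) - (B 1 - A 1) * (C 0 - A 0)) := by ring
      rw [e0]; exact hge
    obtain ⟨_, hgood⟩ := dichB hsd
    by_cases hw0 : K₁ 0 - B 0 = 0 ∧ K₁ 1 - B 1 = 0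
    · have h1 : K₁ 0 = B 0 := by linarith [hw0.1]
      have h2 : K₁ 1 = B 1 := by linarith [hw0.2]
      have h3 : ((B 0 - A 0) * (K₁ 1 - A 1) - (B 1 - A 1) * (K₁ 0 - A 0)) = 0 := by rw [h1, h2]; ring
      rw [h3] at hbad
      simp at hbad
    · have hXB := (hgood hw0).1
      have e1 : ((K₁ 0 - B 0) * (A 1 - B 1) - (K₁ 1 - B 1) * (A 0 - B 0)) * ((C 0 - B 0) * (A 1 - B 1) - (C 1 - B 1) * (A 0 - B 0)) = ((B 0 - A 0) * (K₁ 1 - A 1) - (B 1 - A 1) * (K₁ 0 - A 0)) * ((B 0 - A 0) * (C 1 - A 1) - (B 1 - A 1) * (C 0 - A 0)) := by ring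
      rw [e1] at hXB
      exact absurd hbad (not_lt.mpr hXB.le)

  have badCofB : ((C 0 - B 0) * (K₁ 1 - B 1) - (C 1 - B 1) * (K₁ 0 - B 0)) * ((B 0 - A 0) * (C 1 - A 1) - (B 1 - A 1) * (C 0 - A 0)) < 0 → ((A 0 - C 0) * (K₁ 1 - C 1) - (A 1 - C 1) * (K₁ 0 - C 0)) * ((B 0 - A 0) * (C 1 - A 1) - (B 1 - A 1) * (C 0 - A 0)) < 0 := by
    intro hbad
    by_contra hge
    push_neg at hge
    have hsd : ((A 0 - C 0) * (K₁ 1 - C 1) - (A 1 - C 1) * (K₁ 0 - C 0)) * ((A 0 - C 0) * (B 1 - C 1) - (A 1 - C 1) * (B 0 - C 0)) ≥ 0 := by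
      have e0 : ((A 0 - C 0) * (B 1 - C 1) - (A 1 - C 1) * (B 0 - C 0)) = ((B 0 - A 0) * (C 1 - A 1) - (B 1 - A 1) * (C 0 - A 0)) := by ring
      rw [e0]; exact hge
    obtain ⟨_, hgood⟩ := dichC hsd
    by_cases hw0 : K₁ 0 - C 0 = 0 ∧ K₁ 1 - C 1 = 0
    · have h1 : K₁ 0 = C 0 := by linarith [hw0.1]
      have h2 : K₁ 1 = C 1 := by linarith [hw0.2]
      have h3 : ((C 0 - B 0) * (K₁ 1 - B 1) - (C 1 - B 1) * (K₁ 0 - B 0)) = 0 := by rw [h1, h2]; ring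
      rw [h3] at hbad
      simp at hbad
    · have hXB := (hgood hw0).1
      have e1 : ((K₁ 0 - C 0) * (B 1 - C 1) - (K₁ 1 - C 1) * (B 0 - C 0)) * ((A 0 - C 0) * (B 1 - C 1) - (A 1 - C 1) * (B 0 - C 0)) = ((C 0 - B 0) * (K₁ 1 - B 1) - (C 1 - B 1) * (K₁ 0 - B 0)) * ((B 0 - A 0) * (C 1 - A 1) - (B 1 - A 1) * (C 0 - A 0)) := by ring
      rw [e1] at hXB
      exact absurd hbad (not_lt.mpr hXB.le)

  have badAofC : ((A 0 - C 0) * (K₁ 1 - C 1) - (A 1 - C 1) * (K₁ 0 - C 0)) * ((B 0 - A 0) * (C 1 - A 1) - (B 1 - A 1) * (C 0 - A 0)) < 0 → ((B 0 - A 0) * (K₁ 1 - A 1) - (B 1 - A 1) * (K₁ 0 - A 0)) * ((B 0 - A 0) * (C 1 - A 1) - (B 1 - A 1) * (C 0 - A 0)) < 0 := by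
    intro hbad
    by_contra hge
    push_neg at hge
    have hsd : ((B 0 - A 0) * (K₁ 1 - A 1) - (B 1 - A 1) * (K₁ 0 - A 0)) * ((B 0 - A 0) * (C 1 - A 1) - (B 1 - A 1) * (C 0 - A 0)) ≥ 0 := by
      have e0 : ((B 0 - A 0) * (C 1 - A 1) - (B 1 - A 1) * (C 0 - A 0)) = ((B 0 - A 0) * (C 1 - A 1) - (B 1 - A 1) * (C 0 - A 0)) := by ring
      rw [e0]; exact hge
    obtain ⟨_, hgood⟩ := dichA hsd
    by_cases hw0 : K₁ 0 - A 0 = 0 ∧ K₁ 1 - A 1 = 0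
    · have h1 : K₁ 0 = A 0 := by linarith [hw0.1]
      have h2 : K₁ 1 = A 1 := by linarith [hw0.2]
      have h3 : ((A 0 - C 0) * (K₁ 1 - C 1) - (A 1 - C 1) * (K₁ 0 - C 0)) = 0 := by rw [h1, h2]; ring
      rw [h3] at hbad
      simp at hbad
    · have hXB := (hgood hw0).1
      have e1 : ((K₁ 0 - A 0) * (C 1 - A 1) - (K₁ 1 - A 1) * (C 0 - A 0)) * ((B 0 - A 0) * (C 1 - A 1) - (B 1 - A 1) * (C 0 - A 0)) = ((A 0 - C 0) * (K₁ 1 - C 1) - (A 1 - C 1) * (K₁ 0 - C 0)) * ((B 0 - A 0) * (C 1 - A 1) - (B 1 - A 1) * (C 0 - A 0)) := by ring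
      rw [e1] at hXB
      exact absurd hbad (not_lt.mpr hXB.le)

  have hgoodA : 0 ≤ ((B 0 - A 0) * (K₁ 1 - A 1) - (B 1 - A 1) * (K₁ 0 - A 0)) * ((B 0 - A 0) * (C 1 - A 1) - (B 1 - A 1) * (C 0 - A 0)) := by
    by_contra hlt
    push_neg at hlt
    have hb2 := badBofA hlt
    have hb3 := badCofB hb2
    have hsum : ((B 0 - A 0) * (K₁ 1 - A 1) - (B 1 - A 1) * (K₁ 0 - A 0)) * ((B 0 - A 0) * (C 1 - A 1) - (B 1 - A 1) * (C 0 - A 0)) + ((C 0 - B 0) * (K₁ 1 - B 1) - (C 1 - B 1) * (K₁ 0 - B 0)) * ((B 0 - A 0) * (C 1 - A 1) - (B 1 - A 1) * (C 0 - A 0)) + ((A 0 - C 0) * (K₁ 1 - C 1) - (A 1 - C 1) * (K₁ 0 - C 0)) * ((B 0 - A 0) * (C 1 - A 1) - (B 1 - A 1) * (C 0 - A 0)) = ((B 0 - A 0) * (C 1 - A 1) - (B 1 - A 1) * (C 0 - A 0))^2 := by ring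
    have h9 := add_lt_add (add_lt_add hlt hb2) hb3
    rw [hsum] at h9
    simp only [add_zero] at h9
    exact absurd h9 (not_lt.mpr (sq_nonneg _))

  have hgoodB : 0 ≤ ((C 0 - B 0) * (K₁ 1 - B 1) - (C 1 - B 1) * (K₁ 0 - B 0)) * ((B 0 - A 0) * (C 1 - A 1) - (B 1 - A 1) * (C 0 - A 0)) := by
    by_contra hlt
    push_neg at hlt
    have hb2 := badCofB hlt
    have hb3 := badAofC hb2
    have hsum : ((C 0 - B 0) * (K₁ 1 - B 1) - (C 1 - B 1) * (K₁ 0 - B 0)) * ((B 0 - A 0) * (C 1 - A 1) - (B 1 - A 1) * (C 0 - A 0)) + ((A 0 - C 0) * (K₁ 1 - C 1) - (A 1 - C 1) * (K₁ 0 - C 0)) * ((B 0 - A 0) * (C 1 - A 1) - (B 1 - A 1) * (C 0 - A 0)) + ((B 0 - A 0) * (K₁ 1 - A 1) - (B 1 - A 1) * (K₁ 0 - A 0)) * ((B 0 - A 0) * (C 1 - A 1) - (B 1 - A 1) * (C 0 - A 0)) = ((B 0 - A 0) * (C 1 - A 1) - (B 1 - A 1) * (C 0 - A 0))^2 := by 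ring
    have h9 := add_lt_add (add_lt_add hlt hb2) hb3
    rw [hsum] at h9
    simp only [add_zero] at h9
    exact absurd h9 (not_lt.mpr (sq_nonneg _))

  have hgoodC : 0 ≤ ((A 0 - C 0) * (K₁ 1 - C 1) - (A 1 - C 1) * (K₁ 0 - C 0)) * ((B 0 - A 0) * (C 1 - A 1) - (B 1 - A 1) * (C 0 - A 0)) := by
    by_contra hlt
    push_neg at hlt
    have hb2 := badAofC hlt
    have hb3 := badBofA hb2
    have hsum : ((A 0 - C 0) * (K₁ 1 - C 1) - (A 1 - C 1) * (K₁ 0 - C 0)) * ((B 0 - A 0) * (C 1 - A 1) - (B 1 - A 1) * (C 0 - A 0)) + ((B 0 - A 0) * (K₁ 1 - A 1) - (B 1 - A 1) * (K₁ 0 - A 0)) * ((B 0 - A 0) * (C 1 - A 1) - (B 1 - A 1) * (C 0 - A 0)) + ((C 0 - B 0) * (K₁ 1 - B 1) - (C 1 - B 1) * (K₁ 0 - B 0)) * ((B 0 - A 0) * (C 1 - A 1) - (B 1 - A 1) * (C 0 - A 0)) = ((B 0 - A 0) * (C 1 - A 1) - (B 1 - A 1) * (C 0 - A 0))^2 :=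 by ring
    have h9 := add_lt_add (add_lt_add hlt hb2) hb3
    rw [hsum] at h9
    simp only [add_zero] at h9
    exact absurd h9 (not_lt.mpr (sq_nonneg _))

  obtain ⟨hDeqA, hgA⟩ := dichA (by
    have e0 : ((B 0 - A 0) * (C 1 - A 1) - (B 1 - A 1) * (C 0 - A 0)) = ((B 0 - A 0) * (C 1 - A 1) - (B 1 - A 1) * (C 0 - A 0)) := by ring
    rw [e0]; exact hgoodA)

  obtain ⟨hDeqB, hgB⟩ := dichB (by
    have e0 : ((C 0 - B 0) * (A 1 - B 1) - (C 1 - B 1) * (A 0 - B 0)) = ((B 0 - A 0) * (C 1 - A 1) - (B 1 - A 1) * (C 0 - A 0)) := by ring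
    rw [e0]; exact hgoodB)

  obtain ⟨hDeqC, hgC⟩ := dichC (by
    have e0 : ((A 0 - C 0) * (B 1 - C 1) - (A 1 - C 1) * (B 0 - C 0)) = ((B 0 - A 0) * (C 1 - A 1) - (B 1 - A 1) * (C 0 - A 0)) := by ring
    rw [e0]; exact hgoodC)

  have hwneA : ¬(K₁ 0 - A 0 = 0 ∧ K₁ 1 - A 1 = 0) := by
    rintro ⟨h1, h2⟩
    have h1' : K₁ 0 = A 0 := by linarith
    have h2' : K₁ 1 = A 1 := by linarith
    have hwY : ¬(K₁ 0 - B 0 = 0 ∧ K₁ 1 - B 1 = 0) := by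
      rintro ⟨g1, g2⟩
      apply hs
      have g1' : A 0 = B 0 := by linarith
      have g2' : A 1 = B 1 := by linarith
      rw [g1', g2']; ring
    have hXY := (hgB hwY).1
    have e0 : ((K₁ 0 - B 0) * (A 1 - B 1) - (K₁ 1 - B 1) * (A 0 - B 0)) = 0 := by rw [h1', h2']; ring
    rw [e0] at hXY
    simp at hXY

  have hwneB : ¬(K₁ 0 - B 0 = 0 ∧ K₁ 1 - B 1 = 0) := by
    rintro ⟨h1, h2⟩
    have h1' : K₁ 0 = B 0 := by linarith
    have h2' : K₁ 1 = B 1 := by linarith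
    have hwY : ¬(K₁ 0 - C 0 = 0 ∧ K₁ 1 - C 1 = 0) := by
      rintro ⟨g1, g2⟩
      apply hs
      have g1' : B 0 = C 0 := by linarith
      have g2' : B 1 = C 1 := by linarith
      rw [g1', g2']; ring
    have hXY := (hgC hwY).1
    have e0 : ((K₁ 0 - C 0) * (B 1 - C 1) - (K₁ 1 - C 1) * (B 0 - C 0)) = 0 := by rw [h1', h2']; ring
    rw [e0] at hXY
    simp at hXY

  have hwneC : ¬(K₁ 0 - C 0 = 0 ∧ K₁ 1 - C 1 = 0) := by
    rintro ⟨h1, h2⟩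
    have h1' : K₁ 0 = C 0 := by linarith
    have h2' : K₁ 1 = C 1 := by linarith
    have hwY : ¬(K₁ 0 - A 0 = 0 ∧ K₁ 1 - A 1 = 0) := by
      rintro ⟨g1, g2⟩
      apply hs
      have g1' : C 0 = A 0 := by linarith
      have g2' : C 1 = A 1 := by linarith
      rw [g1', g2']; ring
    have hXY := (hgA hwY).1
    have e0 : ((K₁ 0 - A 0) * (C 1 - A 1) - (K₁ 1 - A 1) * (C 0 - A 0)) = 0 := by rw [h1', h2']; ring
    rw [e0] at hXY
    simp at hXY

  refine ⟨?_, ?_, ?_⟩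

  · -- goal 1
    have hc0ne : ((B 0 - A 0) * (C 1 - A 1) - (B 1 - A 1) * (C 0 - A 0)) ≠ 0 := fun h0 => hs (by linear_combination h0)
    have hx : (U 0 - V 0) * (A 0 - K 0) + (U 1 - V 1) * (A 1 - K 1) = 0 := by
      have h := hAperp
      rw [inner2] at h
      simp only [sub_apply2] at h
      linear_combination h
    have hy0 : F 0 - E 0 = f * (B 0 - A 0) - (1 - eE) * (C 0 - A 0) := by linear_combination hf0 - he0
    have hy1 : F 1 - E 1 = f * (B 1 - A 1) - (1 - eE) * (C 1 - A 1) := by linear_combination hf1 - he1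
    have hnu2pos : 0 < ((B 0 - A 0)^2 + (B 1 - A 1)^2) := cross_ne_pos hc0ne
    have hnv2pos : 0 < ((C 0 - A 0)^2 + (C 1 - A 1)^2) := cross_ne_pos' hc0ne
    have key : ((f * (B 0 - A 0) - (1 - eE) * (C 0 - A 0)) * (A 0 - K 0) + (f * (B 1 - A 1) - (1 - eE) * (C 1 - A 1)) * (A 1 - K 1)) * (((B 0 - A 0)^2 + (B 1 - A 1)^2) * ((C 0 - A 0)^2 + (C 1 - A 1)^2)) = 0 := by
      linear_combination (-(((K 0 - A 0) * (B 0 - A 0) + (K 1 - A 1) * (B 1 - A 1))) * ((C 0 - A 0)^2 + (C 1 - A 1)^2)) * hfeqA + (((K 0 - A 0) * (C 0 - A 0) + (K 1 - A 1) * (C 1 - A 1))) * ((B 0 - A 0)^2 + (B 1 - A 1)^2) * heeqA2 + (-((B 0 - A 0) * (C 1 - A 1) - (B 1 - A 1) * (C 0 - A 0))) * hDeqA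
    have hy : (F 0 - E 0) * (A 0 - K 0) + (F 1 - E 1) * (A 1 - K 1) = 0 := by
      rw [hy0, hy1]
      rcases mul_eq_zero.mp key with h | h
      · exact h
      · exact absurd h (ne_of_gt (mul_pos hnu2pos hnv2pos))
    have hyne : ¬(F 0 - E 0 = 0 ∧ F 1 - E 1 = 0) := by
      rintro ⟨h1, h2⟩
      have hz0 : f * (B 0 - A 0) - (1 - eE) * (C 0 - A 0) = 0 := by rw [← hy0]; exact h1
      have hz1 : f * (B 1 - A 1) - (1 - eE) * (C 1 - A 1) = 0 := by rw [← hy1]; exact h2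
      have hm1S : f * ((B 0 - A 0) * (C 1 - A 1) - (B 1 - A 1) * (C 0 - A 0)) = 0 := by linear_combination ((C 1 - A 1)) * hz0 - ((C 0 - A 0)) * hz1
      have hm2S : (1 - eE) * ((B 0 - A 0) * (C 1 - A 1) - (B 1 - A 1) * (C 0 - A 0)) = 0 := by linear_combination ((B 1 - A 1)) * hz0 - ((B 0 - A 0)) * hz1
      have hm10 : f = 0 := by
        rcases mul_eq_zero.mp hm1S with h | h
        · exact h
        · exact absurd h hs
      have hm20 : (1 - eE) = 0 := by
        rcases mul_eq_zero.mp hm2S with h | h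
        · exact h
        · exact absurd h hs
      have hW0 : ((K₁ 0 - A 0) * (B 0 - A 0) + (K₁ 1 - A 1) * (B 1 - A 1)) = 0 := by linear_combination ((B 0 - A 0)^2 + (B 1 - A 1)^2) * hm10 - hfeqA
      have hZ0 : ((K₁ 0 - A 0) * (C 0 - A 0) + (K₁ 1 - A 1) * (C 1 - A 1)) = 0 := by linear_combination ((C 0 - A 0)^2 + (C 1 - A 1)^2) * hm20 - heeqA2
      apply hwneA
      constructor
      · have h5 : (K₁ 0 - A 0) * ((B 0 - A 0) * (C 1 - A 1) - (B 1 - A 1) * (C 0 - A 0)) = 0 := by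
          linear_combination ((C 1 - A 1)) * hW0 - ((B 1 - A 1)) * hZ0
        rcases mul_eq_zero.mp h5 with h | h
        · exact h
        · exact absurd h hs
      · have h6 : (K₁ 1 - A 1) * ((B 0 - A 0) * (C 1 - A 1) - (B 1 - A 1) * (C 0 - A 0)) = 0 := by
          linear_combination (-((C 0 - A 0))) * hW0 + ((B 0 - A 0)) * hZ0
        rcases mul_eq_zero.mp h6 with h | h
        · exact h
        · exact absurd h hs
    have hqne : ¬(A 0 - K 0 = 0 ∧ A 1 - K 1 = 0) := by
      rintro ⟨h1, h2⟩
      have h3 : K 0 - A 0 = 0 := by linarith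
      have h4 : K 1 - A 1 = 0 := by linarith
      rw [h3, h4] at hcuA
      have h5 : γ * ((B 0 - A 0) * (C 1 - A 1) - (B 1 - A 1) * (C 0 - A 0)) = 0 := by linear_combination (-1 : ℝ) * hcuA
      exact (mul_ne_zero (ne_of_gt hγ) hs) h5
    obtain ⟨c, hc0', hc1'⟩ := perp2 hqne hx hy hyne
    exact ⟨c, by
      ext i
      fin_cases i
      · exact hc0'
      · exact hc1'⟩

  · -- goal 2
    have hc0ne : ((C 0 - B 0) * (A 1 - B 1) - (C 1 - B 1) * (A 0 - B 0)) ≠ 0 := fun h0 => hs (by linear_combination h0)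
    have hx : (T 0 - V 0) * (B 0 - K 0) + (T 1 - V 1) * (B 1 - K 1) = 0 := by
      have h := hBperp
      rw [inner2] at h
      simp only [sub_apply2] at h
      linear_combination (-1 : ℝ) * h
    have hy0 : F 0 - D 0 = (1 - f) * (A 0 - B 0) - d * (C 0 - B 0) := by linear_combination hf0 - hd0
    have hy1 : F 1 - D 1 = (1 - f) * (A 1 - B 1) - d * (C 1 - B 1) := by linear_combination hf1 - hd1
    have hnu2pos : 0 < ((C 0 - B 0)^2 + (C 1 - B 1)^2) := cross_ne_pos hc0ne
    have hnv2pos : 0 < ((A 0 - B 0)^2 + (A 1 - B 1)^2) := cross_ne_pos' hc0ne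
    have key : (((1 - f) * (A 0 - B 0) - d * (C 0 - B 0)) * (B 0 - K 0) + ((1 - f) * (A 1 - B 1) - d * (C 1 - B 1)) * (B 1 - K 1)) * (((C 0 - B 0)^2 + (C 1 - B 1)^2) * ((A 0 - B 0)^2 + (A 1 - B 1)^2)) = 0 := by
      linear_combination ((((K 0 - B 0) * (C 0 - B 0) + (K 1 - B 1) * (C 1 - B 1))) * ((A 0 - B 0)^2 + (A 1 - B 1)^2)) * hdeqB + (-(((K 0 - B 0) * (A 0 - B 0) + (K 1 - B 1) * (A 1 - B 1))) * ((C 0 - B 0)^2 + (C 1 - B 1)^2)) * hfeqB2 + ((C 0 - B 0) * (A 1 - B 1) - (C 1 - B 1) * (A 0 - B 0)) * hDeqB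
    have hy : (F 0 - D 0) * (B 0 - K 0) + (F 1 - D 1) * (B 1 - K 1) = 0 := by
      rw [hy0, hy1]
      rcases mul_eq_zero.mp key with h | h
      · exact h
      · exact absurd h (ne_of_gt (mul_pos hnu2pos hnv2pos))
    have hyne : ¬(F 0 - D 0 = 0 ∧ F 1 - D 1 = 0) := by
      rintro ⟨h1, h2⟩
      have hz0 : (1 - f) * (A 0 - B 0) - d * (C 0 - B 0) = 0 := by rw [← hy0]; exact h1
      have hz1 : (1 - f) * (A 1 - B 1) - d * (C 1 - B 1) = 0 := by rw [← hy1]; exact h2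
      have hm1S : d * ((B 0 - A 0) * (C 1 - A 1) - (B 1 - A 1) * (C 0 - A 0)) = 0 := by linear_combination (-((A 1 - B 1))) * hz0 + ((A 0 - B 0)) * hz1
      have hm2S : (1 - f) * ((B 0 - A 0) * (C 1 - A 1) - (B 1 - A 1) * (C 0 - A 0)) = 0 := by linear_combination (-((C 1 - B 1))) * hz0 + ((C 0 - B 0)) * hz1
      have hm10 : d = 0 := by
        rcases mul_eq_zero.mp hm1S with h | h
        · exact h
        · exact absurd h hs
      have hm20 : (1 - f) = 0 := by
        rcases mul_eq_zero.mp hm2S with h | h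
        · exact h
        · exact absurd h hs
      have hW0 : ((K₁ 0 - B 0) * (C 0 - B 0) + (K₁ 1 - B 1) * (C 1 - B 1)) = 0 := by linear_combination ((C 0 - B 0)^2 + (C 1 - B 1)^2) * hm10 - hdeqB
      have hZ0 : ((K₁ 0 - B 0) * (A 0 - B 0) + (K₁ 1 - B 1) * (A 1 - B 1)) = 0 := by linear_combination ((A 0 - B 0)^2 + (A 1 - B 1)^2) * hm20 - hfeqB2
      apply hwneB
      constructor
      · have h5 : (K₁ 0 - B 0) * ((B 0 - A 0) * (C 1 - A 1) - (B 1 - A 1) * (C 0 - A 0)) = 0 := by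
          linear_combination ((A 1 - B 1)) * hW0 - ((C 1 - B 1)) * hZ0
        rcases mul_eq_zero.mp h5 with h | h
        · exact h
        · exact absurd h hs
      · have h6 : (K₁ 1 - B 1) * ((B 0 - A 0) * (C 1 - A 1) - (B 1 - A 1) * (C 0 - A 0)) = 0 := by
          linear_combination (-((A 0 - B 0))) * hW0 + ((C 0 - B 0)) * hZ0
        rcases mul_eq_zero.mp h6 with h | h
        · exact h
        · exact absurd h hs
    have hqne : ¬(B 0 - K 0 = 0 ∧ B 1 - K 1 = 0) := by
      rintro ⟨h1, h2⟩
      have h3 : K 0 - B 0 = 0 := by linarith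
      have h4 : K 1 - B 1 = 0 := by linarith
      rw [h3, h4] at hcuB
      have h5 : α * ((B 0 - A 0) * (C 1 - A 1) - (B 1 - A 1) * (C 0 - A 0)) = 0 := by linear_combination (-1 : ℝ) * hcuB
      exact (mul_ne_zero (ne_of_gt hα) hs) h5
    obtain ⟨c, hc0', hc1'⟩ := perp2 hqne hx hy hyne
    exact ⟨c, by
      ext i
      fin_cases i
      · exact hc0'
      · exact hc1'⟩

  · -- goal 3
    have hc0ne : ((A 0 - C 0) * (B 1 - C 1) - (A 1 - C 1) * (B 0 - C 0)) ≠ 0 := fun h0 => hs (by linear_combination h0)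
    have hx : (U 0 - T 0) * (C 0 - K 0) + (U 1 - T 1) * (C 1 - K 1) = 0 := by
      have h := hCperp
      rw [inner2] at h
      simp only [sub_apply2] at h
      linear_combination h
    have hy0 : E 0 - D 0 = eE * (A 0 - C 0) - (1 - d) * (B 0 - C 0) := by linear_combination he0 - hd0
    have hy1 : E 1 - D 1 = eE * (A 1 - C 1) - (1 - d) * (B 1 - C 1) := by linear_combination he1 - hd1
    have hnu2pos : 0 < ((A 0 - C 0)^2 + (A 1 - C 1)^2) := cross_ne_pos hc0ne
    have hnv2pos : 0 < ((B 0 - C 0)^2 + (B 1 - C 1)^2) := cross_ne_pos' hc0ne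
    have key : ((eE * (A 0 - C 0) - (1 - d) * (B 0 - C 0)) * (C 0 - K 0) + (eE * (A 1 - C 1) - (1 - d) * (B 1 - C 1)) * (C 1 - K 1)) * (((A 0 - C 0)^2 + (A 1 - C 1)^2) * ((B 0 - C 0)^2 + (B 1 - C 1)^2)) = 0 := by
      linear_combination (-(((K 0 - C 0) * (A 0 - C 0) + (K 1 - C 1) * (A 1 - C 1))) * ((B 0 - C 0)^2 + (B 1 - C 1)^2)) * heeqC + (((K 0 - C 0) * (B 0 - C 0) + (K 1 - C 1) * (B 1 - C 1))) * ((A 0 - C 0)^2 + (A 1 - C 1)^2) * hdeqC2 + (-((A 0 - C 0) * (B 1 - C 1) - (A 1 - C 1) * (B 0 - C 0))) * hDeqC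
    have hy : (E 0 - D 0) * (C 0 - K 0) + (E 1 - D 1) * (C 1 - K 1) = 0 := by
      rw [hy0, hy1]
      rcases mul_eq_zero.mp key with h | h
      · exact h
      · exact absurd h (ne_of_gt (mul_pos hnu2pos hnv2pos))
    have hyne : ¬(E 0 - D 0 = 0 ∧ E 1 - D 1 = 0) := by
      rintro ⟨h1, h2⟩
      have hz0 : eE * (A 0 - C 0) - (1 - d) * (B 0 - C 0) = 0 := by rw [← hy0]; exact h1
      have hz1 : eE * (A 1 - C 1) - (1 - d) * (B 1 - C 1) = 0 := by rw [← hy1]; exact h2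
      have hm1S : eE * ((B 0 - A 0) * (C 1 - A 1) - (B 1 - A 1) * (C 0 - A 0)) = 0 := by linear_combination ((B 1 - C 1)) * hz0 - ((B 0 - C 0)) * hz1
      have hm2S : (1 - d) * ((B 0 - A 0) * (C 1 - A 1) - (B 1 - A 1) * (C 0 - A 0)) = 0 := by linear_combination ((A 1 - C 1)) * hz0 - ((A 0 - C 0)) * hz1
      have hm10 : eE = 0 := by
        rcases mul_eq_zero.mp hm1S with h | h
        · exact h
        · exact absurd h hs
      have hm20 : (1 - d) = 0 := by
        rcases mul_eq_zero.mp hm2S with h | h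
        · exact h
        · exact absurd h hs
      have hW0 : ((K₁ 0 - C 0) * (A 0 - C 0) + (K₁ 1 - C 1) * (A 1 - C 1)) = 0 := by linear_combination ((A 0 - C 0)^2 + (A 1 - C 1)^2) * hm10 - heeqC
      have hZ0 : ((K₁ 0 - C 0) * (B 0 - C 0) + (K₁ 1 - C 1) * (B 1 - C 1)) = 0 := by linear_combination ((B 0 - C 0)^2 + (B 1 - C 1)^2) * hm20 - hdeqC2
      apply hwneC
      constructor
      · have h5 : (K₁ 0 - C 0) * ((B 0 - A 0) * (C 1 - A 1) - (B 1 - A 1) * (C 0 - A 0)) = 0 := by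
          linear_combination ((B 1 - C 1)) * hW0 - ((A 1 - C 1)) * hZ0
        rcases mul_eq_zero.mp h5 with h | h
        · exact h
        · exact absurd h hs
      · have h6 : (K₁ 1 - C 1) * ((B 0 - A 0) * (C 1 - A 1) - (B 1 - A 1) * (C 0 - A 0)) = 0 := by
          linear_combination (-((B 0 - C 0))) * hW0 + ((A 0 - C 0)) * hZ0
        rcases mul_eq_zero.mp h6 with h | h
        · exact h
        · exact absurd h hs
    have hqne : ¬(C 0 - K 0 = 0 ∧ C 1 - K 1 = 0) := by
      rintro ⟨h1, h2⟩
      have h3 : K 0 - C 0 = 0 := by linarith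
      have h4 : K 1 - C 1 = 0 := by linarith
      rw [h3, h4] at hcuC
      have h5 : β * ((B 0 - A 0) * (C 1 - A 1) - (B 1 - A 1) * (C 0 - A 0)) = 0 := by linear_combination (-1 : ℝ) * hcuC
      exact (mul_ne_zero (ne_of_gt hβ) hs) h5
    obtain ⟨c, hc0', hc1'⟩ := perp2 hqne hx hy hyne
    exact ⟨c, by
      ext i
      fin_cases i
      · exact hc0'
      · exact hc1'⟩
end
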